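/- arXiv:2305.00254 — 6 statements merged into one kernel-verified Lean document; each statement's English description precedes it below -/
import Mathlib

section
/- Let X₁, …, X_n be i.i.d. Bernoulli(p) random variables with p ∈ [0,1], n ≥ 3, and let p̂ = (1/n)·∑_{i=1}^n X_i. Then for every δ ∈ (0,1), with probability at least 1 − 2δ, |p − p̂| ≤ min{ √(2·p̂·(1−p̂)·log(4/δ)/n) + 4·log(4/δ)/n , √(log(2/δ)/(2n)) }. -/
open MeasureTheory ProbabilityTheory Real

lemma nonneg_of_deriv {f f' : ℝ → ℝ} (hd : ∀ t, HasDerivAt f (f' t) t)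
    (h0 : f 0 = 0) (hf' : ∀ t, 0 ≤ t → 0 ≤ f' t) {t : ℝ} (ht : 0 ≤ t) : 0 ≤ f t := by
  have hmono : MonotoneOn f (Set.Ici (0:ℝ)) := by
    refine monotoneOn_of_deriv_nonneg (convex_Ici 0) ?_ ?_ ?_
    · exact fun x _ => (hd x).differentiableAt.continuousAt.continuousWithinAt
    · exact fun x _ => (hd x).differentiableAt.differentiableWithinAt
    · intro x hx
      rw [(hd x).deriv]
      rw [interior_Ici] at hx
      exact hf' x hx.le
  have := hmono Set.self_mem_Ici (Set.mem_Ici.2 ht) ht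
  rwa [h0] at this

lemma aux1 (t : ℝ) : 0 ≤ 1 + (t - 1) * exp t := by
  have h := Real.add_one_le_exp (-t)
  have hprod : exp (-t) * exp t = 1 := by rw [← Real.exp_add]; simp
  nlinarith [mul_le_mul_of_nonneg_right h (Real.exp_pos t).le, hprod]

lemma aux2 {t : ℝ} (ht : 0 ≤ t) : 0 ≤ 2 + t + (t - 2) * exp t := by
  refine nonneg_of_deriv (f := fun t : ℝ => 2 + t + (t - 2) * exp t)
    (f' := fun t : ℝ => 1 + (t - 1) * exp t) (fun x => ?_) (by norm_num) (fun x _ => aux1 x) ht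
  have h : HasDerivAt (fun t : ℝ => 2 + t + (t - 2) * exp t) (1 + (1 * exp x + (x - 2) * exp x)) x :=
    ((hasDerivAt_id x).const_add 2).add (((hasDerivAt_id x).sub_const 2).mul (Real.hasDerivAt_exp x))
  exact h.congr_deriv (by ring)

lemma cubic_bound {t : ℝ} (ht : 0 ≤ t) : exp t * (3 - t) ≤ 3 + 2 * t + t ^ 2 / 2 := by
  have h : 0 ≤ 3 + 2 * t + t ^ 2 / 2 - exp t * (3 - t) := by
    refine nonneg_of_deriv (f := fun t : ℝ => 3 + 2 * t + t ^ 2 / 2 - exp t * (3 - t))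
      (f' := fun t : ℝ => 2 + t + (t - 2) * exp t) (fun x => ?_) (by norm_num) (fun x hx => aux2 hx) ht
    have h : HasDerivAt (fun t : ℝ => 3 + 2 * t + t ^ 2 / 2 - exp t * (3 - t))
        (2 * 1 + (↑(2:ℕ) * x ^ (2 - 1)) / 2 - (exp x * (3 - x) + exp x * (-1))) x :=
      ((((hasDerivAt_id x).const_mul 2).const_add 3).add ((hasDerivAt_pow 2 x).div_const 2)).sub
        ((Real.hasDerivAt_exp x).mul ((hasDerivAt_id x).const_sub 3))
    exact h.congr_deriv (by push_cast; ring)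
  linarith

lemma D_pos {p : ℝ} (hp0 : 0 ≤ p) (hp1 : p ≤ 1) (s : ℝ) : 0 < 1 - p + p * exp s := by
  rcases eq_or_lt_of_le hp0 with h | h
  · simp [← h]
  · nlinarith [Real.exp_pos s, mul_pos h (Real.exp_pos s)]

lemma bennett_mgf {p t : ℝ} (hp0 : 0 ≤ p) (hp1 : p ≤ 1) (ht : 0 ≤ t) :
    p * exp t + (1 - p) ≤ exp (p * t + p * (1 - p) * (exp t - 1 - t)) := by
  have hD := fun s => D_pos hp0 hp1 s
  have key : 0 ≤ p * t + p * (1 - p) * (exp t - 1 - t) - Real.log (1 - p + p * exp t) := by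
    refine nonneg_of_deriv
      (f := fun s : ℝ => p * s + p * (1 - p) * (exp s - 1 - s) - Real.log (1 - p + p * exp s))
      (f' := fun s : ℝ => p + p * (1 - p) * (exp s - 1) - p * exp s / (1 - p + p * exp s))
      (fun x => ?_) (by simp) (fun s hs => ?_) ht
    · have hlog : HasDerivAt (fun s : ℝ => Real.log (1 - p + p * exp s))
          (p * exp x / (1 - p + p * exp x)) x :=
        (((Real.hasDerivAt_exp x).const_mul p).const_add (1 - p)).log (hD x).ne'
      have h := ((((hasDerivAt_id x).const_mul p)).add
        ((((Real.hasDerivAt_exp x).sub_const 1).sub (hasDerivAt_id x)).const_mul (p * (1 - p)))).sub hlog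
      exact h.congr_deriv (by ring)
    · have hE : 1 ≤ exp s := Real.one_le_exp hs
      have hD' := hD s
      have key2 : p * exp s ≤ (p + p * (1 - p) * (exp s - 1)) * (1 - p + p * exp s) := by
        nlinarith [mul_nonneg (mul_nonneg (mul_nonneg hp0 hp0) (sub_nonneg.2 hp1)) (sq_nonneg (exp s - 1))]
      have := (div_le_iff₀ hD').2 key2
      linarith
  have h2 : 1 - p + p * exp t ≤ exp (p * t + p * (1 - p) * (exp t - 1 - t)) := by
    calc 1 - p + p * exp t = exp (Real.log (1 - p + p * exp t)) := (Real.exp_log (hD t)).symm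
    _ ≤ _ := Real.exp_le_exp.2 (by linarith)
  linarith

lemma hoeffding_mgf {p t : ℝ} (hp0 : 0 ≤ p) (hp1 : p ≤ 1) (ht : 0 ≤ t) :
    p * exp t + (1 - p) ≤ exp (p * t + t ^ 2 / 8) := by
  have hD := fun s => D_pos hp0 hp1 s
  have hderiv : ∀ x : ℝ, HasDerivAt (fun s : ℝ => p + s / 4 - p * exp s / (1 - p + p * exp s))
      (1 / 4 - (p * exp x * (1 - p + p * exp x) - p * exp x * (p * exp x)) / (1 - p + p * exp x) ^ 2) x := by
    intro x
    have hnum : HasDerivAt (fun s : ℝ => p * exp s) (p * exp x) x := (Real.hasDerivAt_exp x).const_mul p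
    have hden : HasDerivAt (fun s : ℝ => 1 - p + p * exp s) (p * exp x) x :=
      ((Real.hasDerivAt_exp x).const_mul p).const_add (1 - p)
    have h := (((hasDerivAt_id x).div_const 4).const_add p).sub (hnum.div hden (hD x).ne')
    exact h.congr_deriv (by ring)
  have hf'nonneg : ∀ s : ℝ, 0 ≤ s → 0 ≤ p + s / 4 - p * exp s / (1 - p + p * exp s) := by
    intro s hs
    refine nonneg_of_deriv (f := fun s : ℝ => p + s / 4 - p * exp s / (1 - p + p * exp s))
      (f' := fun x : ℝ => 1 / 4 - (p * exp x * (1 - p + p * exp x) - p * exp x * (p * exp x)) / (1 - p + p * exp x) ^ 2)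
      hderiv (by simp) (fun x _ => ?_) hs
    have hD' := hD x
    have hsq : (p * exp x * (1 - p + p * exp x) - p * exp x * (p * exp x)) / (1 - p + p * exp x) ^ 2 ≤ 1 / 4 := by
      rw [div_le_iff₀ (by positivity)]
      nlinarith [sq_nonneg (1 - p - p * exp x), Real.exp_pos x]
    linarith
  have key : 0 ≤ p * t + t ^ 2 / 8 - Real.log (1 - p + p * exp t) := by
    refine nonneg_of_deriv
      (f := fun s : ℝ => p * s + s ^ 2 / 8 - Real.log (1 - p + p * exp s))
      (f' := fun s : ℝ => p + s / 4 - p * exp s / (1 - p + p * exp s))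
      (fun x => ?_) (by simp) hf'nonneg ht
    have hlog : HasDerivAt (fun s : ℝ => Real.log (1 - p + p * exp s))
        (p * exp x / (1 - p + p * exp x)) x :=
      (((Real.hasDerivAt_exp x).const_mul p).const_add (1 - p)).log (hD x).ne'
    have h := (((hasDerivAt_id x).const_mul p).add ((hasDerivAt_pow 2 x).div_const 8)).sub hlog
    exact h.congr_deriv (by push_cast; ring)
  have h2 : 1 - p + p * exp t ≤ exp (p * t + t ^ 2 / 8) := by
    calc 1 - p + p * exp t = exp (Real.log (1 - p + p * exp t)) := (Real.exp_log (hD t)).symm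
    _ ≤ _ := Real.exp_le_exp.2 (by linarith)
  linarith

lemma bennett_mgf_neg {p t : ℝ} (hp0 : 0 ≤ p) (hp1 : p ≤ 1) (ht : t ≤ 0) :
    p * exp t + (1 - p) ≤ exp (p * t + p * (1 - p) * (exp (-t) - 1 + t)) := by
  have h := bennett_mgf (p := 1 - p) (t := -t) (by linarith) (by linarith) (by linarith)
  have h2 := mul_le_mul_of_nonneg_right h (Real.exp_pos t).le
  have hmul : exp (-t) * exp t = 1 := by rw [← Real.exp_add]; simp
  calc p * exp t + (1 - p)
      = ((1 - p) * exp (-t) + (1 - (1 - p))) * exp t := by nlinarith [hmul]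
    _ ≤ exp ((1 - p) * -t + (1 - p) * (1 - (1 - p)) * (exp (-t) - 1 - -t)) * exp t := h2
    _ = exp (p * t + p * (1 - p) * (exp (-t) - 1 + t)) := by
        rw [← Real.exp_add]; congr 1; ring

lemma hoeffding_mgf_all {p t : ℝ} (hp0 : 0 ≤ p) (hp1 : p ≤ 1) :
    p * exp t + (1 - p) ≤ exp (p * t + t ^ 2 / 8) := by
  rcases le_or_gt 0 t with ht | ht
  · exact hoeffding_mgf hp0 hp1 ht
  · have h := hoeffding_mgf (p := 1 - p) (t := -t) (by linarith) (by linarith) (by linarith)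
    have h2 := mul_le_mul_of_nonneg_right h (Real.exp_pos t).le
    have hmul : exp (-t) * exp t = 1 := by rw [← Real.exp_add]; simp
    calc p * exp t + (1 - p)
        = ((1 - p) * exp (-t) + (1 - (1 - p))) * exp t := by nlinarith [hmul]
      _ ≤ exp ((1 - p) * -t + (-t) ^ 2 / 8) * exp t := h2
      _ = exp (p * t + t ^ 2 / 8) := by rw [← Real.exp_add]; congr 1; ring

lemma bexp_core {σ2 L nn r sB d u : ℝ} (hσ : 0 < σ2) (hL : 0 < L) (hn : 0 < nn)
    (hr0 : 0 ≤ r) (hr2 : r ^ 2 = 2 * σ2 * L / nn)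
    (hsB : sB = r + 2 * L / (3 * nn)) (hd : d = 3 * σ2 + sB) (hu : u = 3 * sB / d) :
    0 ≤ u ∧ nn * (σ2 * (exp u - 1 - u)) - u * (nn * sB) ≤ -L := by
  have hsBpos : 0 < sB := by
    rw [hsB]; have : 0 < 2 * L / (3 * nn) := by positivity
    linarith
  have hd0 : 0 < d := by rw [hd]; linarith [hσ]
  have hu0 : 0 ≤ u := by rw [hu]; positivity
  refine ⟨hu0, ?_⟩
  have hu3 : 3 - u = 9 * σ2 / d := by
    rw [hu, hd]; field_simp; ring
  have h3u : 0 < 3 - u := by rw [hu3]; positivity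
  have hc := cubic_bound hu0
  have hh : (exp u - 1 - u) * (3 - u) ≤ 3 / 2 * u ^ 2 := by nlinarith [hc]
  have hh2 : σ2 * (exp u - 1 - u) ≤ σ2 * (3 / 2 * u ^ 2 / (3 - u)) :=
    mul_le_mul_of_nonneg_left ((le_div_iff₀ h3u).2 hh) hσ.le
  have hval : σ2 * (3 / 2 * u ^ 2 / (3 - u)) = 3 / 2 * sB ^ 2 / d := by
    rw [hu3, hu]; field_simp; ring
  have huval : u * (nn * sB) = 3 * nn * sB ^ 2 / d := by
    rw [hu]; field_simp
  have hr2' : nn * r ^ 2 = 2 * σ2 * L := by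
    rw [hr2]; field_simp
  have key : 2 * L * d ≤ 3 * nn * sB ^ 2 := by
    have h1 : 3 * nn * r ^ 2 = 6 * σ2 * L := by linarith
    have h2 : 6 * nn * r * (2 * L / (3 * nn)) = 4 * L * r := by
      field_simp; ring
    have h3 : 3 * nn * (2 * L / (3 * nn)) ^ 2 = 2 * L * (2 * L / (3 * nn)) := by
      field_simp
    have h4 : 0 ≤ 2 * L * r := by positivity
    rw [hd, hsB]; nlinarith [h1, h2, h3, h4]
  have hLd : L ≤ 3 / 2 * nn * sB ^ 2 / d := by
    rw [le_div_iff₀ hd0]; nlinarith [key]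
  calc nn * (σ2 * (exp u - 1 - u)) - u * (nn * sB)
      ≤ nn * (3 / 2 * sB ^ 2 / d) - 3 * nn * sB ^ 2 / d := by
        rw [huval]
        have := mul_le_mul_of_nonneg_left (hh2.trans_eq hval) hn.le
        linarith
    _ = -(3 / 2 * nn * sB ^ 2 / d) := by field_simp; ring
    _ ≤ -L := by linarith

lemma bernstein_exponent {σ2 L nn : ℝ} (hσ0 : 0 ≤ σ2) (hL : 0 < L) (hn : 0 < nn) :
    ∃ u : ℝ, 0 ≤ u ∧
      nn * (σ2 * (exp u - 1 - u)) -
        u * (nn * (Real.sqrt (2 * σ2 * L / nn) + 2 * L / (3 * nn))) ≤ -L := by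
  rcases eq_or_lt_of_le hσ0 with hσz | hσ
  · refine ⟨3, by norm_num, ?_⟩
    rw [← hσz]
    have h0 : Real.sqrt (2 * 0 * L / nn) = 0 := by simp
    rw [h0]
    have h1 : nn * (2 * L / (3 * nn)) = 2 * L / 3 := by field_simp
    nlinarith [hL]
  obtain ⟨h1, h2⟩ := bexp_core (u := 3 * (Real.sqrt (2 * σ2 * L / nn) + 2 * L / (3 * nn)) /
      (3 * σ2 + (Real.sqrt (2 * σ2 * L / nn) + 2 * L / (3 * nn))))
    hσ hL hn (Real.sqrt_nonneg _) (Real.sq_sqrt (by positivity)) rfl rfl rfl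
  exact ⟨_, h1, h2⟩

lemma quad_resolve {a b v s r q : ℝ} (ha : 0 ≤ a) (hb : 0 ≤ b) (hv : 0 ≤ v) (hs : 0 ≤ s)
    (hba : b ≤ a) (hr : r ^ 2 = a * v) (hr0 : 0 ≤ r) (hq : q ^ 2 = a * b) (hq0 : 0 ≤ q)
    (h : s ≤ Real.sqrt (a * (v + s)) + b) : s ≤ r + a + b + q := by
  rcases le_or_gt s b with h1 | h1
  · linarith
  · have h2 : s - b ≤ Real.sqrt (a * (v + s)) := by linarith
    have h3 : (s - b) ^ 2 ≤ a * (v + s) :=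
      (Real.le_sqrt (by linarith) (by positivity)).1 h2
    by_contra hcon
    push_neg at hcon
    have hqb : b ≤ q := by nlinarith [hq, sq_nonneg (q - b), sq_nonneg (q + b)]
    have fact : 0 < s + (r + a + b + q) - 2 * b - a := by linarith
    have prod := mul_pos (sub_pos.2 hcon) fact
    nlinarith [prod, h3, hr, hq, mul_nonneg hr0 hq0, mul_nonneg ha hr0, mul_nonneg ha hq0]

lemma emp_bernstein_det {p phat L nn : ℝ} (hp0 : 0 ≤ p) (hp1 : p ≤ 1)
    (hphat0 : 0 ≤ phat) (hphat1 : phat ≤ 1) (hL : 0 < L) (hn : 0 < nn)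
    (h : |p - phat| ≤ Real.sqrt (2 * (p * (1 - p)) * L / nn) + 2 * L / (3 * nn)) :
    |p - phat| ≤ Real.sqrt (2 * phat * (1 - phat) * L / nn) + 4 * L / nn := by
  set s := |p - phat| with hsdef
  have hs0 : 0 ≤ s := abs_nonneg _
  set v := phat * (1 - phat) with hvdef
  have hv0 : 0 ≤ v := by nlinarith
  set a := 2 * L / nn with hadef
  set b := 2 * L / (3 * nn) with hbdef
  have ha0 : 0 ≤ a := by positivity
  have hb0 : 0 ≤ b := by positivity
  have hba : b ≤ a := by rw [hadef, hbdef]; rw [div_le_div_iff₀ (by positivity) (by positivity)]; nlinarith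
  have hσv : p * (1 - p) ≤ v + s := by
    have h1 : p - phat ≤ s := le_abs_self _
    have h2 : -s ≤ p - phat := neg_abs_le _
    have habs : |1 - p - phat| ≤ 1 := abs_le.2 ⟨by linarith, by linarith⟩
    have : p * (1 - p) - v = (p - phat) * (1 - p - phat) := by rw [hvdef]; ring
    calc p * (1 - p) = v + (p - phat) * (1 - p - phat) := by linarith
      _ ≤ v + |(p - phat) * (1 - p - phat)| := by linarith [le_abs_self ((p - phat) * (1 - p - phat))]
      _ = v + s * |1 - p - phat| := by rw [abs_mul]
      _ ≤ v + s * 1 := by nlinarith [mul_le_mul_of_nonneg_left habs hs0]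
      _ = v + s := by ring
  have harg : 2 * (p * (1 - p)) * L / nn ≤ a * (v + s) := by
    rw [show a * (v + s) = 2 * (v + s) * L / nn from by rw [hadef]; ring]
    gcongr
  have hmono := Real.sqrt_le_sqrt harg
  have h' : s ≤ Real.sqrt (a * (v + s)) + b := by
    calc s ≤ Real.sqrt (2 * (p * (1 - p)) * L / nn) + b := h
      _ ≤ _ := by linarith
  set r := Real.sqrt (a * v) with hrdef
  set q := Real.sqrt (a * b) with hqdef
  have hr2 : r ^ 2 = a * v := Real.sq_sqrt (by positivity)
  have hq2 : q ^ 2 = a * b := Real.sq_sqrt (by positivity)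
  have hres := quad_resolve ha0 hb0 hv0 hs0 hba hr2 (Real.sqrt_nonneg _) hq2 (Real.sqrt_nonneg _) h'
  have hrval : r = Real.sqrt (2 * phat * (1 - phat) * L / nn) := by
    rw [hrdef]; congr 1; rw [hadef, hvdef]; ring
  have hqle : q ≤ 4 * L / (3 * nn) := by
    have hab : a * b ≤ (4 * L / (3 * nn)) ^ 2 := by
      have hdiff : (4 * L / (3 * nn)) ^ 2 - a * b = 4 * L ^ 2 / (9 * nn ^ 2) := by
        rw [hadef, hbdef]; field_simp; ring
      have : 0 ≤ 4 * L ^ 2 / (9 * nn ^ 2) := by positivity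
      linarith
    calc q ≤ Real.sqrt ((4 * L / (3 * nn)) ^ 2) := Real.sqrt_le_sqrt hab
      _ = 4 * L / (3 * nn) := Real.sqrt_sq (by positivity)
  have hsum : a + b + 4 * L / (3 * nn) = 4 * L / nn := by
    rw [hadef, hbdef]; field_simp; ring
  rw [← hrval]
  linarith

section Prob
variable {Ω : Type*} [MeasurableSpace Ω] {Pr : Measure Ω} [IsProbabilityMeasure Pr]
  {n : ℕ} {p : ℝ} {X : Fin n → Ω → ℝ}

lemma integrable_bern_dirac {f : ℝ → ℝ} (hf : Measurable f) (a : ℝ) :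
    Integrable f (Measure.dirac a) := by
  refine (integrable_const (f a)).congr ?_
  rw [Filter.EventuallyEq, MeasureTheory.ae_dirac_iff
    (measurableSet_eq_fun measurable_const hf)]

lemma bern_exp_integrable (hXm : ∀ i, Measurable (X i))
    (hXdist : ∀ i, Measure.map (X i) Pr =
      ENNReal.ofReal p • Measure.dirac (1:ℝ) + ENNReal.ofReal (1 - p) • Measure.dirac (0:ℝ))
    (i : Fin n) (t : ℝ) : Integrable (fun ω => exp (t * X i ω)) Pr := by
  have hmeas : Measurable fun x : ℝ => exp (t * x) := (measurable_id.const_mul t).exp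
  rw [show (fun ω => exp (t * X i ω)) = (fun x => exp (t * x)) ∘ X i from rfl,
    ← integrable_map_measure hmeas.aestronglyMeasurable (hXm i).aemeasurable, hXdist i]
  exact ((integrable_bern_dirac hmeas 1).smul_measure ENNReal.ofReal_ne_top).add_measure
    ((integrable_bern_dirac hmeas 0).smul_measure ENNReal.ofReal_ne_top)

lemma bern_mgf (hp0 : 0 ≤ p) (hp1 : p ≤ 1) (hXm : ∀ i, Measurable (X i))
    (hXdist : ∀ i, Measure.map (X i) Pr =
      ENNReal.ofReal p • Measure.dirac (1:ℝ) + ENNReal.ofReal (1 - p) • Measure.dirac (0:ℝ))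
    (i : Fin n) (t : ℝ) : mgf (X i) Pr t = p * exp t + (1 - p) := by
  have hmeas : Measurable fun x : ℝ => exp (t * x) := (measurable_id.const_mul t).exp
  have : mgf (X i) Pr t = ∫ x, exp (t * x) ∂(Measure.map (X i) Pr) :=
    (integral_map (hXm i).aemeasurable hmeas.aestronglyMeasurable).symm
  rw [this, hXdist i,
    integral_add_measure ((integrable_bern_dirac hmeas 1).smul_measure ENNReal.ofReal_ne_top)
      ((integrable_bern_dirac hmeas 0).smul_measure ENNReal.ofReal_ne_top),
    integral_smul_measure, integral_smul_measure, integral_dirac, integral_dirac]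
  simp [ENNReal.toReal_ofReal hp0, ENNReal.toReal_ofReal (by linarith : (0:ℝ) ≤ 1 - p)]

lemma bern_tail_ge (hp0 : 0 ≤ p) (hp1 : p ≤ 1)
    (hXindep : iIndepFun X Pr) (hXm : ∀ i, Measurable (X i))
    (hXdist : ∀ i, Measure.map (X i) Pr =
      ENNReal.ofReal p • Measure.dirac (1:ℝ) + ENNReal.ofReal (1 - p) • Measure.dirac (0:ℝ))
    {t c : ℝ} (ε : ℝ) (ht : 0 ≤ t) (hmgf : p * exp t + (1 - p) ≤ exp c) :
    (Pr {ω | ε ≤ ∑ i, X i ω}).toReal ≤ exp (-t * ε + n * c) := by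
  have hint : ∀ i ∈ Finset.univ, Integrable (fun ω => exp (t * X i ω)) Pr :=
    fun i _ => bern_exp_integrable hXm hXdist i t
  have hS := measure_ge_le_exp_mul_mgf (X := ∑ i, X i) (μ := Pr) ε ht
    (hXindep.integrable_exp_mul_sum hXm hint)
  rw [hXindep.mgf_sum hXm] at hS
  have hprod : ∀ j : Fin n, mgf (X j) Pr t = p * exp t + (1 - p) :=
    fun j => bern_mgf hp0 hp1 hXm hXdist j t
  rw [Finset.prod_congr rfl (fun j _ => hprod j), Finset.prod_const, Finset.card_univ,
    Fintype.card_fin] at hS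
  have hset : {ω | ε ≤ (∑ i, X i) ω} = {ω | ε ≤ ∑ i, X i ω} := by
    ext ω; simp [Finset.sum_apply]
  rw [hset] at hS
  refine hS.trans ?_
  have hnn : 0 ≤ p * exp t + (1 - p) := by nlinarith [Real.exp_pos t]
  have hpow : (p * exp t + (1 - p)) ^ n ≤ exp c ^ n := pow_le_pow_left₀ hnn hmgf n
  calc exp (-t * ε) * (p * exp t + (1 - p)) ^ n ≤ exp (-t * ε) * exp c ^ n := by
        exact mul_le_mul_of_nonneg_left hpow (Real.exp_pos _).le
    _ = exp (-t * ε + n * c) := by rw [← Real.exp_nat_mul, ← Real.exp_add]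

lemma bern_tail_le (hp0 : 0 ≤ p) (hp1 : p ≤ 1)
    (hXindep : iIndepFun X Pr) (hXm : ∀ i, Measurable (X i))
    (hXdist : ∀ i, Measure.map (X i) Pr =
      ENNReal.ofReal p • Measure.dirac (1:ℝ) + ENNReal.ofReal (1 - p) • Measure.dirac (0:ℝ))
    {t c : ℝ} (ε : ℝ) (ht : t ≤ 0) (hmgf : p * exp t + (1 - p) ≤ exp c) :
    (Pr {ω | ∑ i, X i ω ≤ ε}).toReal ≤ exp (-t * ε + n * c) := by
  have hint : ∀ i ∈ Finset.univ, Integrable (fun ω => exp (t * X i ω)) Pr :=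
    fun i _ => bern_exp_integrable hXm hXdist i t
  have hS := measure_le_le_exp_mul_mgf (X := ∑ i, X i) (μ := Pr) ε ht
    (hXindep.integrable_exp_mul_sum hXm hint)
  rw [hXindep.mgf_sum hXm] at hS
  have hprod : ∀ j : Fin n, mgf (X j) Pr t = p * exp t + (1 - p) :=
    fun j => bern_mgf hp0 hp1 hXm hXdist j t
  rw [Finset.prod_congr rfl (fun j _ => hprod j), Finset.prod_const, Finset.card_univ,
    Fintype.card_fin] at hS
  have hset : {ω | (∑ i, X i) ω ≤ ε} = {ω | ∑ i, X i ω ≤ ε} := by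
    ext ω; simp [Finset.sum_apply]
  rw [hset] at hS
  refine hS.trans ?_
  have hnn : 0 ≤ p * exp t + (1 - p) := by nlinarith [Real.exp_pos t]
  have hpow : (p * exp t + (1 - p)) ^ n ≤ exp c ^ n := pow_le_pow_left₀ hnn hmgf n
  calc exp (-t * ε) * (p * exp t + (1 - p)) ^ n ≤ exp (-t * ε) * exp c ^ n := by
        exact mul_le_mul_of_nonneg_left hpow (Real.exp_pos _).le
    _ = exp (-t * ε + n * c) := by rw [← Real.exp_nat_mul, ← Real.exp_add]

lemma bern_ae_01 (hp0 : 0 ≤ p) (hp1 : p ≤ 1) (hXm : ∀ i, Measurable (X i))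
    (hXdist : ∀ i, Measure.map (X i) Pr =
      ENNReal.ofReal p • Measure.dirac (1:ℝ) + ENNReal.ofReal (1 - p) • Measure.dirac (0:ℝ))
    (i : Fin n) : Pr (X i ⁻¹' ({0, 1} : Set ℝ))ᶜ = 0 := by
  have hmeasset : MeasurableSet ({0, 1} : Set ℝ) := by measurability
  have h1 : Pr (X i ⁻¹' {0, 1}) = 1 := by
    rw [← Measure.map_apply (hXm i) hmeasset, hXdist i]
    simp only [Measure.add_apply, Measure.smul_apply, smul_eq_mul]
    rw [Measure.dirac_apply' _ hmeasset, Measure.dirac_apply' _ hmeasset]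
    simp only [Set.indicator_of_mem (by simp : (1:ℝ) ∈ ({0,1}:Set ℝ)),
      Set.indicator_of_mem (by simp : (0:ℝ) ∈ ({0,1}:Set ℝ)), Pi.one_apply, mul_one]
    rw [← ENNReal.ofReal_add hp0 (by linarith)]
    norm_num
  rw [measure_compl (μ := Pr) (hmeasset.preimage (hXm i)) (measure_ne_top _ _), h1]
  simp

end Prob

open MeasureTheory ProbabilityTheory

theorem stmt_1 {Ω : Type*} [MeasurableSpace Ω] (Pr : Measure Ω) [IsProbabilityMeasure Pr]
    (n : ℕ) (hn : 3 ≤ n) (p : ℝ) (hp : p ∈ Set.Icc (0:ℝ) 1)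
    (X : Fin n → Ω → ℝ) (hXm : ∀ i, Measurable (X i))
    (hXindep : iIndepFun X Pr)
    (hXdist : ∀ i, Measure.map (X i) Pr =
      ENNReal.ofReal p • Measure.dirac (1:ℝ) + ENNReal.ofReal (1 - p) • Measure.dirac (0:ℝ))
    (δ : ℝ) (hδ : δ ∈ Set.Ioo (0:ℝ) 1) :
    ENNReal.ofReal (1 - 2 * δ) ≤
      Pr {ω | |p - (n:ℝ)⁻¹ * ∑ i, X i ω| ≤
        min (Real.sqrt (2 * ((n:ℝ)⁻¹ * ∑ i, X i ω) * (1 - (n:ℝ)⁻¹ * ∑ i, X i ω)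
              * Real.log (4 / δ) / n) + 4 * Real.log (4 / δ) / n)
            (Real.sqrt (Real.log (2 / δ) / (2 * n)))} := by
  obtain ⟨hp0, hp1⟩ := hp
  obtain ⟨hδ0, hδ1⟩ := hδ
  have hn0 : (0:ℝ) < (n:ℕ) := by
    have : 0 < n := by omega
    exact_mod_cast this
  have hL4 : 0 < Real.log (4 / δ) := Real.log_pos ((one_lt_div hδ0).2 (by linarith))
  have hL2 : 0 < Real.log (2 / δ) := Real.log_pos ((one_lt_div hδ0).2 (by linarith))
  have hσ0 : 0 ≤ p * (1 - p) := by nlinarith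
  obtain ⟨u, hu0, hukey⟩ := bernstein_exponent (σ2 := p * (1 - p)) (L := Real.log (4 / δ))
    (nn := (n:ℝ)) hσ0 hL4 hn0
  set sB : ℝ := Real.sqrt (2 * (p * (1 - p)) * Real.log (4 / δ) / (n:ℝ)) +
      2 * Real.log (4 / δ) / (3 * (n:ℝ)) with hsBdef
  set sH : ℝ := Real.sqrt (Real.log (2 / δ) / (2 * (n:ℝ))) with hsHdef
  have hsH0 : 0 ≤ sH := by rw [hsHdef]; exact Real.sqrt_nonneg _
  have hsH2 : sH ^ 2 = Real.log (2 / δ) / (2 * (n:ℝ)) := by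
    rw [hsHdef]; exact Real.sq_sqrt (by positivity)
  have hexp4 : Real.exp (-Real.log (4 / δ)) = δ / 4 := by
    rw [Real.exp_neg, Real.exp_log (by positivity), inv_div]
  have hexp2 : Real.exp (-Real.log (2 / δ)) = δ / 2 := by
    rw [Real.exp_neg, Real.exp_log (by positivity), inv_div]
  have hSm : Measurable fun ω => ∑ i, X i ω :=
    Finset.measurable_sum Finset.univ fun i _ => hXm i
  -- tail bounds
  have ht1 : Pr {ω : Ω | (n:ℝ) * (p + sB) ≤ ∑ i, X i ω} ≤ ENNReal.ofReal (δ / 2) := by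
    rw [← ENNReal.ofReal_toReal (measure_ne_top Pr _)]
    apply ENNReal.ofReal_le_ofReal
    refine (bern_tail_ge hp0 hp1 hXindep hXm hXdist _ hu0 (bennett_mgf hp0 hp1 hu0)).trans ?_
    have h1 : -u * ((n:ℝ) * (p + sB)) +
        (n:ℝ) * (p * u + p * (1 - p) * (Real.exp u - 1 - u)) ≤ -Real.log (4 / δ) := by
      calc -u * ((n:ℝ) * (p + sB)) + (n:ℝ) * (p * u + p * (1 - p) * (Real.exp u - 1 - u))
          = (n:ℝ) * (p * (1 - p) * (Real.exp u - 1 - u)) - u * ((n:ℝ) * sB) := by ring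
        _ ≤ -Real.log (4 / δ) := hukey
    refine (Real.exp_le_exp.2 h1).trans ?_
    rw [hexp4]; linarith
  have ht2 : Pr {ω : Ω | ∑ i, X i ω ≤ (n:ℝ) * (p - sB)} ≤ ENNReal.ofReal (δ / 2) := by
    rw [← ENNReal.ofReal_toReal (measure_ne_top Pr _)]
    apply ENNReal.ofReal_le_ofReal
    refine (bern_tail_le hp0 hp1 hXindep hXm hXdist _ (neg_nonpos.2 hu0)
      (bennett_mgf_neg hp0 hp1 (neg_nonpos.2 hu0))).trans ?_
    have h1 : -(-u) * ((n:ℝ) * (p - sB)) +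
        (n:ℝ) * (p * (-u) + p * (1 - p) * (Real.exp (- -u) - 1 + -u)) ≤ -Real.log (4 / δ) := by
      rw [neg_neg]
      calc u * ((n:ℝ) * (p - sB)) + (n:ℝ) * (p * -u + p * (1 - p) * (Real.exp u - 1 + -u))
          = (n:ℝ) * (p * (1 - p) * (Real.exp u - 1 - u)) - u * ((n:ℝ) * sB) := by ring
        _ ≤ -Real.log (4 / δ) := hukey
    refine (Real.exp_le_exp.2 h1).trans ?_
    rw [hexp4]; linarith
  have ht3 : Pr {ω : Ω | (n:ℝ) * (p + sH) ≤ ∑ i, X i ω} ≤ ENNReal.ofReal (δ / 2) := by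
    rw [← ENNReal.ofReal_toReal (measure_ne_top Pr _)]
    apply ENNReal.ofReal_le_ofReal
    refine (bern_tail_ge hp0 hp1 hXindep hXm hXdist _ (by positivity : (0:ℝ) ≤ 4 * sH)
      (hoeffding_mgf_all hp0 hp1 (t := 4 * sH))).trans ?_
    have h1 : -(4 * sH) * ((n:ℝ) * (p + sH)) + (n:ℝ) * (p * (4 * sH) + (4 * sH) ^ 2 / 8)
        = -Real.log (2 / δ) := by
      calc -(4 * sH) * ((n:ℝ) * (p + sH)) + (n:ℝ) * (p * (4 * sH) + (4 * sH) ^ 2 / 8)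
          = -(2 * (n:ℝ) * sH ^ 2) := by ring
        _ = -Real.log (2 / δ) := by rw [hsH2]; field_simp
    rw [h1, hexp2]
  have ht4 : Pr {ω : Ω | ∑ i, X i ω ≤ (n:ℝ) * (p - sH)} ≤ ENNReal.ofReal (δ / 2) := by
    rw [← ENNReal.ofReal_toReal (measure_ne_top Pr _)]
    apply ENNReal.ofReal_le_ofReal
    refine (bern_tail_le hp0 hp1 hXindep hXm hXdist _
      (neg_nonpos.2 (by positivity : (0:ℝ) ≤ 4 * sH)) (hoeffding_mgf_all hp0 hp1 (t := -(4 * sH)))).trans ?_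
    have h1 : -(-(4 * sH)) * ((n:ℝ) * (p - sH)) +
        (n:ℝ) * (p * (-(4 * sH)) + (-(4 * sH)) ^ 2 / 8) = -Real.log (2 / δ) := by
      calc -(-(4 * sH)) * ((n:ℝ) * (p - sH)) + (n:ℝ) * (p * (-(4 * sH)) + (-(4 * sH)) ^ 2 / 8)
          = -(2 * (n:ℝ) * sH ^ 2) := by ring
        _ = -Real.log (2 / δ) := by rw [hsH2]; field_simp
    rw [h1, hexp2]
  -- a.e. 0/1 values
  have hA0 : Pr (⋂ i, X i ⁻¹' ({0, 1} : Set ℝ))ᶜ = 0 := by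
    rw [Set.compl_iInter]
    exact measure_iUnion_null fun i => bern_ae_01 hp0 hp1 hXm hXdist i
  -- bad event
  set B : Set Ω := {ω : Ω | (n:ℝ) * (p + sB) ≤ ∑ i, X i ω} ∪
      {ω : Ω | ∑ i, X i ω ≤ (n:ℝ) * (p - sB)} ∪
      {ω : Ω | (n:ℝ) * (p + sH) ≤ ∑ i, X i ω} ∪
      {ω : Ω | ∑ i, X i ω ≤ (n:ℝ) * (p - sH)} ∪
      (⋂ i, X i ⁻¹' ({0, 1} : Set ℝ))ᶜ with hBdef
  have hmeas01 : MeasurableSet ({0, 1} : Set ℝ) :=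
    (measurableSet_singleton 0).union (measurableSet_singleton 1)
  have hBmeas : MeasurableSet B := by
    rw [hBdef]
    exact ((((measurableSet_le measurable_const hSm).union
      (measurableSet_le hSm measurable_const)).union
      (measurableSet_le measurable_const hSm)).union
      (measurableSet_le hSm measurable_const)).union
      (MeasurableSet.iInter fun i => (hXm i) hmeas01).compl
  have hBbound : Pr B ≤ ENNReal.ofReal (2 * δ) := by
    rw [hBdef]
    calc Pr _ ≤ Pr ({ω : Ω | (n:ℝ) * (p + sB) ≤ ∑ i, X i ω} ∪
          {ω : Ω | ∑ i, X i ω ≤ (n:ℝ) * (p - sB)} ∪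
          {ω : Ω | (n:ℝ) * (p + sH) ≤ ∑ i, X i ω} ∪
          {ω : Ω | ∑ i, X i ω ≤ (n:ℝ) * (p - sH)}) +
          Pr (⋂ i, X i ⁻¹' ({0, 1} : Set ℝ))ᶜ := measure_union_le _ _
      _ = Pr ({ω : Ω | (n:ℝ) * (p + sB) ≤ ∑ i, X i ω} ∪
          {ω : Ω | ∑ i, X i ω ≤ (n:ℝ) * (p - sB)} ∪
          {ω : Ω | (n:ℝ) * (p + sH) ≤ ∑ i, X i ω} ∪
          {ω : Ω | ∑ i, X i ω ≤ (n:ℝ) * (p - sH)}) := by rw [hA0, add_zero]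
      _ ≤ Pr ({ω : Ω | (n:ℝ) * (p + sB) ≤ ∑ i, X i ω} ∪
          {ω : Ω | ∑ i, X i ω ≤ (n:ℝ) * (p - sB)} ∪
          {ω : Ω | (n:ℝ) * (p + sH) ≤ ∑ i, X i ω}) +
          Pr {ω : Ω | ∑ i, X i ω ≤ (n:ℝ) * (p - sH)} := measure_union_le _ _
      _ ≤ Pr ({ω : Ω | (n:ℝ) * (p + sB) ≤ ∑ i, X i ω} ∪
          {ω : Ω | ∑ i, X i ω ≤ (n:ℝ) * (p - sB)}) +
          Pr {ω : Ω | (n:ℝ) * (p + sH) ≤ ∑ i, X i ω} +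
          Pr {ω : Ω | ∑ i, X i ω ≤ (n:ℝ) * (p - sH)} := by
            gcongr
            exact measure_union_le _ _
      _ ≤ Pr {ω : Ω | (n:ℝ) * (p + sB) ≤ ∑ i, X i ω} +
          Pr {ω : Ω | ∑ i, X i ω ≤ (n:ℝ) * (p - sB)} +
          Pr {ω : Ω | (n:ℝ) * (p + sH) ≤ ∑ i, X i ω} +
          Pr {ω : Ω | ∑ i, X i ω ≤ (n:ℝ) * (p - sH)} := by
            gcongr
            exact measure_union_le _ _
      _ ≤ ENNReal.ofReal (δ / 2) + ENNReal.ofReal (δ / 2) + ENNReal.ofReal (δ / 2) +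
          ENNReal.ofReal (δ / 2) := by gcongr
      _ = ENNReal.ofReal (2 * δ) := by
          rw [← ENNReal.ofReal_add (by positivity) (by positivity),
            ← ENNReal.ofReal_add (by positivity) (by positivity),
            ← ENNReal.ofReal_add (by positivity) (by positivity)]
          congr 1
          ring
  have hsub : Bᶜ ⊆ {ω : Ω | |p - (n:ℝ)⁻¹ * ∑ i, X i ω| ≤
      min (Real.sqrt (2 * ((n:ℝ)⁻¹ * ∑ i, X i ω) * (1 - (n:ℝ)⁻¹ * ∑ i, X i ω)
            * Real.log (4 / δ) / n) + 4 * Real.log (4 / δ) / n) sH} := by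
    intro ω hω
    rw [hBdef] at hω
    simp only [Set.mem_compl_iff, Set.mem_union, not_or, Set.mem_setOf_eq, not_not,
      Set.mem_iInter, Set.mem_preimage] at hω
    obtain ⟨⟨⟨⟨h1, h2⟩, h3⟩, h4⟩, h5⟩ := hω
    have h5' : ∀ i, X i ω = 0 ∨ X i ω = 1 := by
      intro i
      have := h5 i
      simpa [Set.mem_insert_iff, Set.mem_singleton_iff] using this
    have hS0 : 0 ≤ ∑ i, X i ω :=
      Finset.sum_nonneg fun i _ => by rcases h5' i with h | h <;> simp [h]
    have hS1 : ∑ i, X i ω ≤ (n:ℝ) := by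
      calc ∑ i, X i ω ≤ ∑ _i : Fin n, (1:ℝ) :=
            Finset.sum_le_sum fun i _ => by rcases h5' i with h | h <;> simp [h]
        _ = (n:ℝ) := by simp
    have hinv : (n:ℝ)⁻¹ * (n:ℝ) = 1 := inv_mul_cancel₀ hn0.ne'
    have hph0 : 0 ≤ (n:ℝ)⁻¹ * ∑ i, X i ω := mul_nonneg (by positivity) hS0
    have hph1 : (n:ℝ)⁻¹ * ∑ i, X i ω ≤ 1 := by
      have h := mul_le_mul_of_nonneg_left hS1 (inv_pos.2 hn0).le
      rwa [hinv] at h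
    have habsB : |p - (n:ℝ)⁻¹ * ∑ i, X i ω| ≤ sB := by
      rw [abs_le]
      have hl := not_le.1 h1
      have hg := not_le.1 h2
      have hl' := mul_lt_mul_of_pos_left hl (inv_pos.2 hn0)
      have hg' := mul_lt_mul_of_pos_left hg (inv_pos.2 hn0)
      have he1 : (n:ℝ)⁻¹ * ((n:ℝ) * (p + sB)) = p + sB := by
        rw [← mul_assoc, hinv, one_mul]
      have he2 : (n:ℝ)⁻¹ * ((n:ℝ) * (p - sB)) = p - sB := by
        rw [← mul_assoc, hinv, one_mul]
      rw [he1] at hl'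
      rw [he2] at hg'
      constructor <;> linarith
    have habsH : |p - (n:ℝ)⁻¹ * ∑ i, X i ω| ≤ sH := by
      rw [abs_le]
      have hl := not_le.1 h3
      have hg := not_le.1 h4
      have hl' := mul_lt_mul_of_pos_left hl (inv_pos.2 hn0)
      have hg' := mul_lt_mul_of_pos_left hg (inv_pos.2 hn0)
      have he1 : (n:ℝ)⁻¹ * ((n:ℝ) * (p + sH)) = p + sH := by
        rw [← mul_assoc, hinv, one_mul]
      have he2 : (n:ℝ)⁻¹ * ((n:ℝ) * (p - sH)) = p - sH := by
        rw [← mul_assoc, hinv, one_mul]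
      rw [he1] at hl'
      rw [he2] at hg'
      constructor <;> linarith
    refine Set.mem_setOf.2 (le_min ?_ habsH)
    have hdet := emp_bernstein_det hp0 hp1 hph0 hph1 hL4 hn0 (by rw [hsBdef] at habsB; exact habsB)
    exact hdet
  calc ENNReal.ofReal (1 - 2 * δ) = 1 - ENNReal.ofReal (2 * δ) := by
        rw [ENNReal.ofReal_sub 1 (by positivity), ENNReal.ofReal_one]
    _ ≤ 1 - Pr B := tsub_le_tsub_left hBbound 1
    _ = Pr Bᶜ := (prob_compl_eq_one_sub hBmeas).symm
    _ ≤ _ := measure_mono hsub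
end

section
/- Let n ≥ 1 be an integer, δ ∈ (0,1), and let p, p̃, p̂ ∈ [0,1] satisfy |p − p̂| ≤ min{ √(2·p̂·(1−p̂)·log(4/δ)/n) + 4·log(4/δ)/n , √(log(2/δ)/(2n)) } and |p̃ − p̂| ≤ min{ √(2·p̂·(1−p̂)·log(4/δ)/n) + 4·log(4/δ)/n , √(log(2/δ)/(2n)) }. Then |p − p̃| ≤ √(8·p·(1−p)·log(4/δ)/n) + 4·(log(4/δ)/n)^{3/4} + 8·log(4/δ)/n. -/
private lemma sqrt_add_le' (a b : ℝ) (ha : 0 ≤ a) (hb : 0 ≤ b) :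
    Real.sqrt (a + b) ≤ Real.sqrt a + Real.sqrt b := by
  have h1 := Real.sq_sqrt ha
  have h2 := Real.sq_sqrt hb
  have h3 := Real.sqrt_nonneg a
  have h4 := Real.sqrt_nonneg b
  have : a + b ≤ (Real.sqrt a + Real.sqrt b) ^ 2 := by nlinarith
  calc Real.sqrt (a + b) ≤ Real.sqrt ((Real.sqrt a + Real.sqrt b) ^ 2) :=
        Real.sqrt_le_sqrt this
    _ = Real.sqrt a + Real.sqrt b := Real.sqrt_sq (by positivity)

theorem stmt_2 (n : ℕ) (hn : 1 ≤ n) (δ p ptilde phat : ℝ)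
    (hδ : δ ∈ Set.Ioo (0:ℝ) 1)
    (hp : p ∈ Set.Icc (0:ℝ) 1) (hpt : ptilde ∈ Set.Icc (0:ℝ) 1)
    (hph : phat ∈ Set.Icc (0:ℝ) 1)
    (h1 : |p - phat| ≤
      min (Real.sqrt (2 * phat * (1 - phat) * Real.log (4 / δ) / n) + 4 * Real.log (4 / δ) / n)
          (Real.sqrt (Real.log (2 / δ) / (2 * n))))
    (h2 : |ptilde - phat| ≤
      min (Real.sqrt (2 * phat * (1 - phat) * Real.log (4 / δ) / n) + 4 * Real.log (4 / δ) / n)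
          (Real.sqrt (Real.log (2 / δ) / (2 * n)))) :
    |p - ptilde| ≤ Real.sqrt (8 * p * (1 - p) * Real.log (4 / δ) / n)
      + 4 * (Real.log (4 / δ) / n) ^ ((3:ℝ) / 4) + 8 * Real.log (4 / δ) / n := by
  obtain ⟨hδ0, hδ1⟩ := hδ
  have hn0 : (0:ℝ) < n := by exact_mod_cast hn
  set L : ℝ := Real.log (4 / δ) / n with hLdef
  have hlog4 : 0 < Real.log (4 / δ) :=
    Real.log_pos ((one_lt_div hδ0).2 (by linarith))
  have hL : 0 < L := div_pos hlog4 hn0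
  -- bound the second term of the min by √(L/2)
  have hB : Real.sqrt (Real.log (2 / δ) / (2 * n)) ≤ Real.sqrt (L / 2) := by
    apply Real.sqrt_le_sqrt
    have hlog : Real.log (2 / δ) ≤ Real.log (4 / δ) :=
      Real.log_le_log (by positivity) (by gcongr; norm_num)
    calc Real.log (2 / δ) / (2 * n) ≤ Real.log (4 / δ) / (2 * n) := by gcongr
      _ = L / 2 := by rw [hLdef]; ring
  have hd : |p - phat| ≤ Real.sqrt (L / 2) := (h1.trans (min_le_right _ _)).trans hB
  have hsq2 : 0 ≤ Real.sqrt (L / 2) := Real.sqrt_nonneg _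
  -- Lipschitz bound on variance
  have hvar : phat * (1 - phat) ≤ p * (1 - p) + Real.sqrt (L / 2) := by
    obtain ⟨hd1, hd2⟩ := abs_le.mp hd
    obtain ⟨hp0, hp1⟩ := hp
    obtain ⟨hph0, hph1⟩ := hph
    nlinarith [sq_nonneg (p - phat), sq_nonneg (p + phat - 1)]
  -- rewrite the min's first component using L
  have e1 : 2 * phat * (1 - phat) * Real.log (4 / δ) / ↑n = 2 * (phat * (1 - phat)) * L := by
    rw [hLdef]; ring
  have e2 : 4 * Real.log (4 / δ) / ↑n = 4 * L := by rw [hLdef]; ring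
  have hA1 : |p - phat| ≤ Real.sqrt (2 * (phat * (1 - phat)) * L) + 4 * L := by
    have := h1.trans (min_le_left _ _); rwa [e1, e2] at this
  have hA2 : |ptilde - phat| ≤ Real.sqrt (2 * (phat * (1 - phat)) * L) + 4 * L := by
    have := h2.trans (min_le_left _ _); rwa [e1, e2] at this
  -- bound √(2 p̂(1-p̂) L)
  have hpp : 0 ≤ p * (1 - p) := mul_nonneg hp.1 (by linarith [hp.2])
  have hsqrt_split : Real.sqrt (2 * (phat * (1 - phat)) * L) ≤
      Real.sqrt (2 * (p * (1 - p)) * L) + Real.sqrt (2 * Real.sqrt (L / 2) * L) := by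
    calc Real.sqrt (2 * (phat * (1 - phat)) * L)
        ≤ Real.sqrt (2 * (p * (1 - p)) * L + 2 * Real.sqrt (L / 2) * L) := by
          apply Real.sqrt_le_sqrt; nlinarith
      _ ≤ _ := sqrt_add_le' _ _ (by positivity) (by positivity)
  -- bound the cross term by 2 L^{3/4}
  have h34 : Real.sqrt (2 * Real.sqrt (L / 2) * L) ≤ 2 * L ^ ((3:ℝ)/4) := by
    have hr : (L ^ ((3:ℝ)/4)) ^ 2 = L ^ ((3:ℝ)/2) := by
      rw [← Real.rpow_natCast (L ^ ((3:ℝ)/4)) 2, ← Real.rpow_mul hL.le]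
      norm_num
    have hLsqrt : Real.sqrt L * L = L ^ ((3:ℝ)/2) := by
      rw [Real.sqrt_eq_rpow]
      nth_rewrite 2 [← Real.rpow_one L]
      rw [← Real.rpow_add hL]; norm_num
    have hb : 2 * Real.sqrt (L / 2) * L ≤ (2 * L ^ ((3:ℝ)/4)) ^ 2 := by
      have h1 : Real.sqrt (L / 2) ≤ Real.sqrt L := Real.sqrt_le_sqrt (by linarith)
      have h2 : 2 * Real.sqrt (L / 2) * L ≤ 2 * (Real.sqrt L * L) := by nlinarith
      have h3 : (2 * L ^ ((3:ℝ)/4)) ^ 2 = 4 * L ^ ((3:ℝ)/2) := by rw [mul_pow, hr]; norm_num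
      have h4 : 0 ≤ L ^ ((3:ℝ)/2) := Real.rpow_nonneg hL.le _
      rw [h3]; rw [hLsqrt] at h2; linarith
    calc Real.sqrt (2 * Real.sqrt (L / 2) * L)
        ≤ Real.sqrt ((2 * L ^ ((3:ℝ)/4)) ^ 2) := Real.sqrt_le_sqrt hb
      _ = 2 * L ^ ((3:ℝ)/4) := Real.sqrt_sq (by positivity)
  -- combine
  have htri : |p - ptilde| ≤ |p - phat| + |ptilde - phat| := by
    calc |p - ptilde| = |(p - phat) + (phat - ptilde)| := by ring_nf
      _ ≤ |p - phat| + |phat - ptilde| := abs_add_le _ _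
      _ = |p - phat| + |ptilde - phat| := by rw [abs_sub_comm phat ptilde]
  have hdouble : Real.sqrt (8 * p * (1 - p) * Real.log (4 / δ) / ↑n)
      = 2 * Real.sqrt (2 * (p * (1 - p)) * L) := by
    rw [show 8 * p * (1 - p) * Real.log (4 / δ) / ↑n = 2^2 * (2 * (p * (1 - p)) * L) by
      rw [hLdef]; ring]
    rw [Real.sqrt_mul (by norm_num) , Real.sqrt_sq (by norm_num)]
  have e3 : 8 * Real.log (4 / δ) / ↑n = 8 * L := by rw [hLdef]; ring
  rw [hdouble, e3]
  calc |p - ptilde| ≤ |p - phat| + |ptilde - phat| := htri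
    _ ≤ (Real.sqrt (2 * (phat * (1 - phat)) * L) + 4 * L)
        + (Real.sqrt (2 * (phat * (1 - phat)) * L) + 4 * L) := add_le_add hA1 hA2
    _ ≤ ((Real.sqrt (2 * (p * (1 - p)) * L) + Real.sqrt (2 * Real.sqrt (L / 2) * L)) + 4 * L)
        + ((Real.sqrt (2 * (p * (1 - p)) * L) + Real.sqrt (2 * Real.sqrt (L / 2) * L)) + 4 * L) := by
          linarith
    _ ≤ 2 * Real.sqrt (2 * (p * (1 - p)) * L) + 4 * L ^ ((3:ℝ)/4) + 8 * L := by linarith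
end

section
/- Let γ ∈ [0,1), r : S×A → [0,1], n ≥ 1 an integer, δ ∈ (0,1), and let P, P̃ be transition kernels such that for all (s,a), ∑_{s'} |P(s'|s,a) − P̃(s'|s,a)| ≤ 2·√(log(2/δ)/(2n)). Then for every stationary policy π, max_{(s,a)∈S×A} |Q_r^{π,P}(s,a) − Q_r^{π,P̃}(s,a)| ≤ (2γ/(1−γ)²)·√(log(2/δ)/(2n)). -/
open Matrix MeasureTheory ProbabilityTheory

/-- A transition kernel on finite state and action spaces. -/
def IsKernel {S A : Type*} [Fintype S] (P : S × A → S → ℝ) : Prop :=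
  (∀ sa s', 0 ≤ P sa s') ∧ ∀ sa, ∑ s', P sa s' = 1

/-- A stationary (randomized) policy. -/
def IsPolicy {S A : Type*} [Fintype A] (π : S → A → ℝ) : Prop :=
  (∀ s a, 0 ≤ π s a) ∧ ∀ s, ∑ a, π s a = 1

/-- The transition matrix on state-action pairs induced by a policy. -/
def kernelMat {S A : Type*} (P : S × A → S → ℝ) (π : S → A → ℝ) :
    Matrix (S × A) (S × A) ℝ :=
  fun sa sa' => P sa sa'.1 * π sa'.1 sa'.2

/-- The state-action value function `Q_b^{π,P} = ∑_{t} γ^t (P^π)^t b`. -/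
noncomputable def Qval {S A : Type*} [Fintype S] [Fintype A] [DecidableEq S] [DecidableEq A]
    (γ : ℝ) (P : S × A → S → ℝ) (π : S → A → ℝ) (b : S × A → ℝ) : S × A → ℝ :=
  ∑' t : ℕ, γ ^ t • (kernelMat P π ^ t).mulVec b

/-- The value function `V_b^{π,P}(s) = ∑_a π(a|s) Q_b^{π,P}(s,a)`. -/
noncomputable def Vval {S A : Type*} [Fintype S] [Fintype A] [DecidableEq S] [DecidableEq A]
    (γ : ℝ) (P : S × A → S → ℝ) (π : S → A → ℝ) (b : S × A → ℝ) (s : S) : ℝ :=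
  ∑ a, π s a * Qval γ P π b (s, a)

/-- The value `V_b^{π,P}(μ) = ∑_s μ(s) V_b^{π,P}(s)`. -/
noncomputable def VvalMu {S A : Type*} [Fintype S] [Fintype A] [DecidableEq S] [DecidableEq A]
    (γ : ℝ) (P : S × A → S → ℝ) (π : S → A → ℝ) (b : S × A → ℝ) (μ : S → ℝ) : ℝ :=
  ∑ s, μ s * Vval γ P π b s

/-- The local variance `Var_P(v)(s,a)`. -/
def localVar {S A : Type*} [Fintype S] (P : S × A → S → ℝ) (v : S → ℝ) (sa : S × A) : ℝ :=
  ∑ s', P sa s' * (v s') ^ 2 - (∑ s', P sa s' * v s') ^ 2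

/-- The confidence radius `d_δ(s,a,s')` computed from `P̂` and `n`. -/
noncomputable def dDelta {S A : Type*} (Phat : S × A → S → ℝ) (n : ℕ) (δ : ℝ)
    (s : S) (a : A) (s' : S) : ℝ :=
  min (Real.sqrt (2 * Phat (s, a) s' * (1 - Phat (s, a) s') * Real.log (4 / δ) / n)
        + 4 * Real.log (4 / δ) / n)
      (Real.sqrt (Real.log (2 / δ) / (2 * n)))


section Aux
variable {ι : Type*} [Fintype ι] [DecidableEq ι]

def StochMat (M : Matrix ι ι ℝ) : Prop :=
  (∀ i j, 0 ≤ M i j) ∧ ∀ i, ∑ j, M i j = 1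

lemma StochMat.mul {M N : Matrix ι ι ℝ} (hM : StochMat M) (hN : StochMat N) :
    StochMat (M * N) := by
  constructor
  · intro i j
    rw [Matrix.mul_apply]
    exact Finset.sum_nonneg fun k _ => mul_nonneg (hM.1 i k) (hN.1 k j)
  · intro i
    simp only [Matrix.mul_apply]
    rw [Finset.sum_comm]
    calc ∑ k, ∑ j, M i k * N k j = ∑ k, M i k * ∑ j, N k j := by
          simp [Finset.mul_sum]
      _ = ∑ k, M i k := by simp [fun k => hN.2 k]
      _ = 1 := hM.2 i

lemma StochMat.pow {M : Matrix ι ι ℝ} (h : StochMat M) (t : ℕ) : StochMat (M ^ t) := by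
  induction t with
  | zero =>
    constructor
    · intro i j
      by_cases hij : i = j <;> simp [Matrix.one_apply, hij]
    · intro i; simp [Matrix.one_apply]
  | succ t ih =>
    rw [pow_succ]
    exact ih.mul h

lemma StochMat.mulVec_abs_le [Nonempty ι] {M : Matrix ι ι ℝ} (h : StochMat M) {v : ι → ℝ} {c : ℝ}
    (hv : ∀ j, |v j| ≤ c) (i : ι) : |M.mulVec v i| ≤ c := by
  have hc : 0 ≤ c := le_trans (abs_nonneg _) (hv (Classical.arbitrary ι))
  calc |M.mulVec v i| ≤ ∑ j, |M i j * v j| := Finset.abs_sum_le_sum_abs _ _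
    _ ≤ ∑ j, M i j * c := by
        refine Finset.sum_le_sum fun j _ => ?_
        rw [abs_mul, abs_of_nonneg (h.1 i j)]
        exact mul_le_mul_of_nonneg_left (hv j) (h.1 i j)
    _ = c := by rw [← Finset.sum_mul, h.2 i, one_mul]

end Aux

section Main
variable {S A : Type*} [Fintype S] [Fintype A] [DecidableEq S] [DecidableEq A]

lemma kernelMat_stoch {P : S × A → S → ℝ} {π : S → A → ℝ}
    (hP : IsKernel P) (hπ : IsPolicy π) : StochMat (kernelMat P π) := by
  constructor
  · intro sa sa'
    exact mul_nonneg (hP.1 sa sa'.1) (hπ.1 sa'.1 sa'.2)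
  · intro sa
    rw [Fintype.sum_prod_type]
    calc ∑ s', ∑ a', P sa s' * π s' a' = ∑ s', P sa s' * ∑ a', π s' a' := by
          simp [Finset.mul_sum]
      _ = ∑ s', P sa s' := by simp [fun s' => hπ.2 s']
      _ = 1 := hP.2 sa

variable [Nonempty S] [Nonempty A]

lemma qval_term_abs_le {γ : ℝ} (hγ : γ ∈ Set.Ico (0:ℝ) 1)
    {P : S × A → S → ℝ} {π : S → A → ℝ} (hP : IsKernel P) (hπ : IsPolicy π)
    {r : S × A → ℝ} (hr : ∀ sa, r sa ∈ Set.Icc (0:ℝ) 1) (t : ℕ) (sa : S × A) :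
    |γ ^ t * ((kernelMat P π ^ t).mulVec r sa)| ≤ γ ^ t := by
  rw [abs_mul, abs_of_nonneg (pow_nonneg hγ.1 t)]
  have : |(kernelMat P π ^ t).mulVec r sa| ≤ 1 :=
    ((kernelMat_stoch hP hπ).pow t).mulVec_abs_le
      (fun j => abs_le.2 ⟨le_trans (by norm_num) (hr j).1, (hr j).2⟩) sa
  calc γ ^ t * |(kernelMat P π ^ t).mulVec r sa| ≤ γ ^ t * 1 :=
        mul_le_mul_of_nonneg_left this (pow_nonneg hγ.1 t)
    _ = γ ^ t := mul_one _

lemma qval_summable {γ : ℝ} (hγ : γ ∈ Set.Ico (0:ℝ) 1)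
    {P : S × A → S → ℝ} {π : S → A → ℝ} (hP : IsKernel P) (hπ : IsPolicy π)
    {r : S × A → ℝ} (hr : ∀ sa, r sa ∈ Set.Icc (0:ℝ) 1) (sa : S × A) :
    Summable (fun t : ℕ => γ ^ t * ((kernelMat P π ^ t).mulVec r sa)) := by
  refine Summable.of_abs (Summable.of_nonneg_of_le (fun t => abs_nonneg _)
    (fun t => qval_term_abs_le hγ hP hπ hr t sa) ?_)
  exact summable_geometric_of_lt_one hγ.1 hγ.2

lemma qval_summable' {γ : ℝ} (hγ : γ ∈ Set.Ico (0:ℝ) 1)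
    {P : S × A → S → ℝ} {π : S → A → ℝ} (hP : IsKernel P) (hπ : IsPolicy π)
    {r : S × A → ℝ} (hr : ∀ sa, r sa ∈ Set.Icc (0:ℝ) 1) :
    Summable (fun t : ℕ => γ ^ t • (kernelMat P π ^ t).mulVec r) := by
  rw [Pi.summable]
  intro sa
  exact qval_summable hγ hP hπ hr sa

lemma qval_apply {γ : ℝ} (hγ : γ ∈ Set.Ico (0:ℝ) 1)
    {P : S × A → S → ℝ} {π : S → A → ℝ} (hP : IsKernel P) (hπ : IsPolicy π)
    {r : S × A → ℝ} (hr : ∀ sa, r sa ∈ Set.Icc (0:ℝ) 1) (sa : S × A) :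
    Qval γ P π r sa = ∑' t : ℕ, γ ^ t * ((kernelMat P π ^ t).mulVec r sa) := by
  unfold Qval
  rw [tsum_apply (qval_summable' hγ hP hπ hr)]
  rfl

lemma qval_abs_le {γ : ℝ} (hγ : γ ∈ Set.Ico (0:ℝ) 1)
    {P : S × A → S → ℝ} {π : S → A → ℝ} (hP : IsKernel P) (hπ : IsPolicy π)
    {r : S × A → ℝ} (hr : ∀ sa, r sa ∈ Set.Icc (0:ℝ) 1) (sa : S × A) :
    |Qval γ P π r sa| ≤ (1 - γ)⁻¹ := by
  rw [qval_apply hγ hP hπ hr]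
  have h1 := qval_summable hγ hP hπ hr sa
  calc |∑' t : ℕ, γ ^ t * ((kernelMat P π ^ t).mulVec r sa)|
      ≤ ∑' t : ℕ, |γ ^ t * ((kernelMat P π ^ t).mulVec r sa)| := by
        simpa only [Real.norm_eq_abs] using norm_tsum_le_tsum_norm (f := fun t : ℕ => γ ^ t * ((kernelMat P π ^ t).mulVec r sa)) (by simpa only [Real.norm_eq_abs] using h1.abs)
    _ ≤ ∑' t : ℕ, γ ^ t := by
        refine Summable.tsum_le_tsum (fun t => qval_term_abs_le hγ hP hπ hr t sa) h1.abs ?_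
        exact summable_geometric_of_lt_one hγ.1 hγ.2
    _ = (1 - γ)⁻¹ := tsum_geometric_of_lt_one hγ.1 hγ.2

lemma qval_bellman {γ : ℝ} (hγ : γ ∈ Set.Ico (0:ℝ) 1)
    {P : S × A → S → ℝ} {π : S → A → ℝ} (hP : IsKernel P) (hπ : IsPolicy π)
    {r : S × A → ℝ} (hr : ∀ sa, r sa ∈ Set.Icc (0:ℝ) 1) (sa : S × A) :
    Qval γ P π r sa = r sa + γ * ∑ sa', kernelMat P π sa sa' * Qval γ P π r sa' := by
  have hsum := qval_summable hγ hP hπ hr sa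
  rw [qval_apply hγ hP hπ hr, Summable.tsum_eq_zero_add hsum]
  congr 1
  · simp [Matrix.one_mulVec]
  have key : ∀ t : ℕ, γ ^ (t + 1) * ((kernelMat P π ^ (t + 1)).mulVec r sa)
      = ∑ sa', kernelMat P π sa sa' * (γ * (γ ^ t * ((kernelMat P π ^ t).mulVec r sa'))) := by
    intro t
    rw [show kernelMat P π ^ (t + 1) = kernelMat P π * kernelMat P π ^ t from pow_succ' _ t,
      ← Matrix.mulVec_mulVec]
    simp only [Matrix.mulVec, dotProduct, Finset.mul_sum]
    refine Finset.sum_congr rfl fun sa' _ => Finset.sum_congr rfl fun x _ => by ring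
  calc ∑' t : ℕ, γ ^ (t + 1) * ((kernelMat P π ^ (t + 1)).mulVec r sa)
      = ∑' t : ℕ, ∑ sa', kernelMat P π sa sa' * (γ * (γ ^ t * ((kernelMat P π ^ t).mulVec r sa'))) := by
        exact tsum_congr key
    _ = ∑ sa', ∑' t : ℕ, kernelMat P π sa sa' * (γ * (γ ^ t * ((kernelMat P π ^ t).mulVec r sa'))) := by
        refine Summable.tsum_finsetSum fun sa' _ => ?_
        exact ((qval_summable hγ hP hπ hr sa').mul_left γ).mul_left _
    _ = γ * ∑ sa', kernelMat P π sa sa' * Qval γ P π r sa' := by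
        rw [Finset.mul_sum]
        refine Finset.sum_congr rfl fun sa' _ => ?_
        rw [tsum_mul_left, tsum_mul_left, qval_apply hγ hP hπ hr]
        ring

end Main


theorem stmt_4 {S A : Type*} [Fintype S] [Fintype A] [DecidableEq S] [DecidableEq A]
    [Nonempty S] [Nonempty A]
    (γ : ℝ) (hγ : γ ∈ Set.Ico (0:ℝ) 1)
    (r : S × A → ℝ) (hr : ∀ sa, r sa ∈ Set.Icc (0:ℝ) 1)
    (n : ℕ) (hn : 1 ≤ n) (δ : ℝ) (hδ : δ ∈ Set.Ioo (0:ℝ) 1)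
    (P Ptilde : S × A → S → ℝ) (hP : IsKernel P) (hPt : IsKernel Ptilde)
    (hclose : ∀ sa : S × A, ∑ s', |P sa s' - Ptilde sa s'| ≤
      2 * Real.sqrt (Real.log (2 / δ) / (2 * n)))
    (π : S → A → ℝ) (hπ : IsPolicy π) :
    ∀ sa : S × A, |Qval γ P π r sa - Qval γ Ptilde π r sa| ≤
      (2 * γ / (1 - γ) ^ 2) * Real.sqrt (Real.log (2 / δ) / (2 * n)) := by
  intro sa
  have hγ1 : (0:ℝ) < 1 - γ := by have := hγ.2; linarith
  set ε := Real.sqrt (Real.log (2 / δ) / (2 * n)) with hεdef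
  have hε0 : (0:ℝ) ≤ ε := Real.sqrt_nonneg _
  obtain ⟨sa0, -, hmax⟩ := Finset.exists_max_image (Finset.univ : Finset (S × A))
    (fun x => |Qval γ P π r x - Qval γ Ptilde π r x|) Finset.univ_nonempty
  set D := |Qval γ P π r sa0 - Qval γ Ptilde π r sa0| with hDdef
  have hD0 : 0 ≤ D := abs_nonneg _
  have hM1 := kernelMat_stoch hP hπ
  have hM2 := kernelMat_stoch hPt hπ
  have hq2b : ∀ x, |Qval γ Ptilde π r x| ≤ (1 - γ)⁻¹ := fun x => qval_abs_le hγ hPt hπ hr x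
  have hrow : ∀ x : S × A, ∑ y : S × A, |kernelMat P π x y - kernelMat Ptilde π x y| ≤ 2 * ε := by
    intro x
    have heq : ∑ y : S × A, |kernelMat P π x y - kernelMat Ptilde π x y|
        = ∑ s', |P x s' - Ptilde x s'| := by
      rw [Fintype.sum_prod_type]
      refine Finset.sum_congr rfl fun s' _ => ?_
      calc ∑ a', |kernelMat P π x (s', a') - kernelMat Ptilde π x (s', a')|
          = ∑ a', |P x s' - Ptilde x s'| * π s' a' := by
            refine Finset.sum_congr rfl fun a' _ => ?_
            simp only [kernelMat]
            rw [← sub_mul, abs_mul, abs_of_nonneg (hπ.1 s' a')]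
        _ = |P x s' - Ptilde x s'| := by rw [← Finset.mul_sum, hπ.2 s', mul_one]
    rw [heq]; exact hclose x
  have key : D ≤ γ * D + γ * (2 * ε * (1 - γ)⁻¹) := by
    have b1 := qval_bellman hγ hP hπ hr sa0
    have b2 := qval_bellman hγ hPt hπ hr sa0
    have hsplit : ∑ y, kernelMat P π sa0 y * Qval γ P π r y
        - ∑ y, kernelMat Ptilde π sa0 y * Qval γ Ptilde π r y
        = (∑ y, kernelMat P π sa0 y * (Qval γ P π r y - Qval γ Ptilde π r y))
          + ∑ y, (kernelMat P π sa0 y - kernelMat Ptilde π sa0 y) * Qval γ Ptilde π r y := by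
      rw [← Finset.sum_add_distrib, ← Finset.sum_sub_distrib]
      exact Finset.sum_congr rfl fun y _ => by ring
    have hA : |∑ y, kernelMat P π sa0 y * (Qval γ P π r y - Qval γ Ptilde π r y)| ≤ D := by
      calc |∑ y, kernelMat P π sa0 y * (Qval γ P π r y - Qval γ Ptilde π r y)|
          ≤ ∑ y, |kernelMat P π sa0 y * (Qval γ P π r y - Qval γ Ptilde π r y)| :=
            Finset.abs_sum_le_sum_abs _ _
        _ ≤ ∑ y, kernelMat P π sa0 y * D := by
            refine Finset.sum_le_sum fun y _ => ?_
            rw [abs_mul, abs_of_nonneg (hM1.1 sa0 y)]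
            exact mul_le_mul_of_nonneg_left (hmax y (Finset.mem_univ y)) (hM1.1 sa0 y)
        _ = D := by rw [← Finset.sum_mul, hM1.2 sa0, one_mul]
    have hB : |∑ y, (kernelMat P π sa0 y - kernelMat Ptilde π sa0 y) * Qval γ Ptilde π r y|
        ≤ 2 * ε * (1 - γ)⁻¹ := by
      calc |∑ y, (kernelMat P π sa0 y - kernelMat Ptilde π sa0 y) * Qval γ Ptilde π r y|
          ≤ ∑ y, |(kernelMat P π sa0 y - kernelMat Ptilde π sa0 y) * Qval γ Ptilde π r y| :=
            Finset.abs_sum_le_sum_abs _ _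
        _ ≤ ∑ y, |kernelMat P π sa0 y - kernelMat Ptilde π sa0 y| * (1 - γ)⁻¹ := by
            refine Finset.sum_le_sum fun y _ => ?_
            rw [abs_mul]
            exact mul_le_mul_of_nonneg_left (hq2b y) (abs_nonneg _)
        _ = (∑ y, |kernelMat P π sa0 y - kernelMat Ptilde π sa0 y|) * (1 - γ)⁻¹ :=
            (Finset.sum_mul _ _ _).symm
        _ ≤ 2 * ε * (1 - γ)⁻¹ :=
            mul_le_mul_of_nonneg_right (hrow sa0) (by positivity)
    calc D = |γ * ((∑ y, kernelMat P π sa0 y * (Qval γ P π r y - Qval γ Ptilde π r y))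
          + ∑ y, (kernelMat P π sa0 y - kernelMat Ptilde π sa0 y) * Qval γ Ptilde π r y)| := by
          rw [hDdef, b1, b2]
          congr 1
          rw [← hsplit]
          ring
      _ = γ * |(∑ y, kernelMat P π sa0 y * (Qval γ P π r y - Qval γ Ptilde π r y))
          + ∑ y, (kernelMat P π sa0 y - kernelMat Ptilde π sa0 y) * Qval γ Ptilde π r y| := by
          rw [abs_mul, abs_of_nonneg hγ.1]
      _ ≤ γ * (D + 2 * ε * (1 - γ)⁻¹) := by
          refine mul_le_mul_of_nonneg_left ?_ hγ.1
          exact le_trans (abs_add_le _ _) (add_le_add hA hB)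
      _ = γ * D + γ * (2 * ε * (1 - γ)⁻¹) := by ring
  have h1 : D * (1 - γ) ≤ γ * (2 * ε * (1 - γ)⁻¹) := by nlinarith [key]
  have h2 : D * (1 - γ) ^ 2 ≤ 2 * γ * ε := by
    have h3 := mul_le_mul_of_nonneg_right h1 (le_of_lt hγ1)
    calc D * (1 - γ) ^ 2 = D * (1 - γ) * (1 - γ) := by ring
      _ ≤ γ * (2 * ε * (1 - γ)⁻¹) * (1 - γ) := h3
      _ = 2 * γ * ε := by field_simp
  have hfin : D ≤ 2 * γ / (1 - γ) ^ 2 * ε := by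
    rw [div_mul_eq_mul_div, le_div_iff₀ (pow_pos hγ1 2)]
    linarith [h2]
  exact le_trans (hmax sa (Finset.mem_univ sa)) hfin
end

section
/- Let γ ∈ [0,1), r : S×A → [0,1], n ≥ 1 an integer, δ ∈ (0,1), and let P, P̃ be transition kernels such that for all (s,a), ∑_{s'} |P(s'|s,a) − P̃(s'|s,a)| ≤ 2·√(log(2/δ)/(2n)). Then for every stationary policy π and every (s,a) ∈ S×A, Var_P(V_r^{π,P})(s,a) ≤ 2·Var_{P̃}(V_r^{π,P̃})(s,a) + (6/(1−γ)²)·√(log(2/δ)/(2n)) + (8γ²/(1−γ)⁴)·(log(2/δ)/(2n)). -/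
open Matrix MeasureTheory ProbabilityTheory

section AuxMDP
variable {S A : Type*} [Fintype S] [Fintype A] [DecidableEq S] [DecidableEq A]

lemma aux_pow_entry_nonneg {I : Type*} [Fintype I] [DecidableEq I] (M : Matrix I I ℝ)
    (h0 : ∀ i j, 0 ≤ M i j) : ∀ (t : ℕ) (i j), 0 ≤ (M ^ t) i j := by
  intro t
  induction t with
  | zero => intro i j; simp [Matrix.one_apply]; split <;> norm_num
  | succ t ih =>
      intro i j
      rw [pow_succ, Matrix.mul_apply]
      exact Finset.sum_nonneg fun k _ => mul_nonneg (ih i k) (h0 k j)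

lemma aux_pow_row_sum {I : Type*} [Fintype I] [DecidableEq I] (M : Matrix I I ℝ)
    (h1 : ∀ i, ∑ j, M i j = 1) : ∀ (t : ℕ) (i), ∑ j, (M ^ t) i j = 1 := by
  intro t
  induction t with
  | zero => intro i; simp [Matrix.one_apply]
  | succ t ih =>
      intro i
      simp only [pow_succ, Matrix.mul_apply]
      rw [Finset.sum_comm]
      calc ∑ k, ∑ j, (M ^ t) i k * M k j = ∑ k, (M ^ t) i k * ∑ j, M k j := by
            simp [Finset.mul_sum]
        _ = 1 := by simp [h1, ih i]

lemma aux_mulVec_bounds {I : Type*} [Fintype I] (M : Matrix I I ℝ)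
    (h0 : ∀ i j, 0 ≤ M i j) (h1 : ∀ i, ∑ j, M i j = 1)
    (v : I → ℝ) (lo hi : ℝ) (hv : ∀ j, lo ≤ v j ∧ v j ≤ hi) (i : I) :
    lo ≤ M.mulVec v i ∧ M.mulVec v i ≤ hi := by
  have e : M.mulVec v i = ∑ j, M i j * v j := rfl
  constructor
  · rw [e]
    calc lo = ∑ j, M i j * lo := by rw [← Finset.sum_mul, h1, one_mul]
      _ ≤ ∑ j, M i j * v j :=
        Finset.sum_le_sum fun j _ => mul_le_mul_of_nonneg_left (hv j).1 (h0 i j)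
  · rw [e]
    calc ∑ j, M i j * v j ≤ ∑ j, M i j * hi :=
        Finset.sum_le_sum fun j _ => mul_le_mul_of_nonneg_left (hv j).2 (h0 i j)
      _ = hi := by rw [← Finset.sum_mul, h1, one_mul]

omit [DecidableEq S] [DecidableEq A] in
lemma kernelMat_nonneg {P : S × A → S → ℝ} {π : S → A → ℝ}
    (hP : IsKernel P) (hπ : IsPolicy π) :
    ∀ sa sa', 0 ≤ kernelMat P π sa sa' :=
  fun sa sa' => mul_nonneg (hP.1 sa sa'.1) (hπ.1 sa'.1 sa'.2)

omit [DecidableEq S] [DecidableEq A] in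
lemma kernelMat_rowsum {P : S × A → S → ℝ} {π : S → A → ℝ}
    (hP : IsKernel P) (hπ : IsPolicy π) :
    ∀ sa, ∑ sa', kernelMat P π sa sa' = 1 := by
  intro sa
  rw [Fintype.sum_prod_type]
  calc ∑ s', ∑ a', kernelMat P π sa (s', a') = ∑ s', P sa s' * ∑ a', π s' a' := by
        simp [kernelMat, Finset.mul_sum]
    _ = 1 := by simp [hπ.2, hP.2 sa]

variable {γ : ℝ} {P : S × A → S → ℝ} {π : S → A → ℝ} {r : S × A → ℝ}

lemma aux_term_bounds (hγ0 : 0 ≤ γ) (hP : IsKernel P) (hπ : IsPolicy π)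
    (hr : ∀ sa, r sa ∈ Set.Icc (0:ℝ) 1) (t : ℕ) (sa : S × A) :
    0 ≤ γ ^ t * ((kernelMat P π ^ t).mulVec r) sa ∧
      γ ^ t * ((kernelMat P π ^ t).mulVec r) sa ≤ γ ^ t := by
  have h0 := aux_pow_entry_nonneg _ (kernelMat_nonneg hP hπ) t
  have h1 := aux_pow_row_sum _ (kernelMat_rowsum hP hπ) t
  have hb := aux_mulVec_bounds _ h0 h1 r 0 1 (fun j => ⟨(hr j).1, (hr j).2⟩) sa
  have hg : (0:ℝ) ≤ γ ^ t := pow_nonneg hγ0 t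
  constructor
  · exact mul_nonneg hg hb.1
  · nlinarith [hb.2]

lemma aux_summable (hγ0 : 0 ≤ γ) (hγ1 : γ < 1) (hP : IsKernel P) (hπ : IsPolicy π)
    (hr : ∀ sa, r sa ∈ Set.Icc (0:ℝ) 1) (sa : S × A) :
    Summable (fun t : ℕ => γ ^ t * ((kernelMat P π ^ t).mulVec r) sa) := by
  apply Summable.of_nonneg_of_le (fun t => (aux_term_bounds hγ0 hP hπ hr t sa).1)
    (fun t => (aux_term_bounds hγ0 hP hπ hr t sa).2)
  exact summable_geometric_of_lt_one hγ0 hγ1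

lemma aux_summable_pi (hγ0 : 0 ≤ γ) (hγ1 : γ < 1) (hP : IsKernel P) (hπ : IsPolicy π)
    (hr : ∀ sa, r sa ∈ Set.Icc (0:ℝ) 1) :
    Summable (fun t : ℕ => γ ^ t • (kernelMat P π ^ t).mulVec r) :=
  Pi.summable.2 fun sa => aux_summable hγ0 hγ1 hP hπ hr sa

lemma Qval_apply (hγ0 : 0 ≤ γ) (hγ1 : γ < 1) (hP : IsKernel P) (hπ : IsPolicy π)
    (hr : ∀ sa, r sa ∈ Set.Icc (0:ℝ) 1) (sa : S × A) :
    Qval γ P π r sa = ∑' t : ℕ, γ ^ t * ((kernelMat P π ^ t).mulVec r) sa := by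
  rw [Qval, tsum_apply (aux_summable_pi hγ0 hγ1 hP hπ hr)]
  rfl

lemma Qval_bounds (hγ0 : 0 ≤ γ) (hγ1 : γ < 1) (hP : IsKernel P) (hπ : IsPolicy π)
    (hr : ∀ sa, r sa ∈ Set.Icc (0:ℝ) 1) (sa : S × A) :
    0 ≤ Qval γ P π r sa ∧ Qval γ P π r sa ≤ (1 - γ)⁻¹ := by
  rw [Qval_apply hγ0 hγ1 hP hπ hr]
  constructor
  · exact tsum_nonneg fun t => (aux_term_bounds hγ0 hP hπ hr t sa).1
  · calc (∑' t : ℕ, γ ^ t * ((kernelMat P π ^ t).mulVec r) sa) ≤ ∑' t : ℕ, γ ^ t :=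
        Summable.tsum_le_tsum (fun t => (aux_term_bounds hγ0 hP hπ hr t sa).2)
          (aux_summable hγ0 hγ1 hP hπ hr sa) (summable_geometric_of_lt_one hγ0 hγ1)
      _ = (1 - γ)⁻¹ := tsum_geometric_of_lt_one hγ0 hγ1

lemma Vval_bounds (hγ0 : 0 ≤ γ) (hγ1 : γ < 1) (hP : IsKernel P) (hπ : IsPolicy π)
    (hr : ∀ sa, r sa ∈ Set.Icc (0:ℝ) 1) (s : S) :
    0 ≤ Vval γ P π r s ∧ Vval γ P π r s ≤ (1 - γ)⁻¹ := by
  constructor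
  · exact Finset.sum_nonneg fun a _ =>
      mul_nonneg (hπ.1 s a) (Qval_bounds hγ0 hγ1 hP hπ hr (s, a)).1
  · calc Vval γ P π r s ≤ ∑ a, π s a * (1 - γ)⁻¹ :=
        Finset.sum_le_sum fun a _ =>
          mul_le_mul_of_nonneg_left (Qval_bounds hγ0 hγ1 hP hπ hr (s, a)).2 (hπ.1 s a)
      _ = (1 - γ)⁻¹ := by rw [← Finset.sum_mul, hπ.2, one_mul]

lemma bellman (hγ0 : 0 ≤ γ) (hγ1 : γ < 1) (hP : IsKernel P) (hπ : IsPolicy π)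
    (hr : ∀ sa, r sa ∈ Set.Icc (0:ℝ) 1) (sa : S × A) :
    Qval γ P π r sa = r sa + γ * ∑ s', P sa s' * Vval γ P π r s' := by
  have hsum := aux_summable hγ0 hγ1 hP hπ hr sa
  rw [Qval_apply hγ0 hγ1 hP hπ hr, Summable.tsum_eq_zero_add hsum]
  have h0 : γ ^ 0 * ((kernelMat P π ^ 0).mulVec r) sa = r sa := by
    simp [Matrix.one_mulVec]
  rw [h0]
  congr 1
  have hstep : ∀ t : ℕ, γ ^ (t + 1) * ((kernelMat P π ^ (t + 1)).mulVec r) sa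
      = ∑ j, kernelMat P π sa j * (γ * (γ ^ t * ((kernelMat P π ^ t).mulVec r) j)) := by
    intro t
    rw [pow_succ' (kernelMat P π) t, ← Matrix.mulVec_mulVec]
    have : (kernelMat P π).mulVec ((kernelMat P π ^ t).mulVec r) sa
        = ∑ j, kernelMat P π sa j * ((kernelMat P π ^ t).mulVec r) j := rfl
    rw [this, Finset.mul_sum]
    exact Finset.sum_congr rfl fun j _ => by ring
  calc (∑' t : ℕ, γ ^ (t + 1) * ((kernelMat P π ^ (t + 1)).mulVec r) sa)
      = ∑' t : ℕ, ∑ j, kernelMat P π sa j * (γ * (γ ^ t * ((kernelMat P π ^ t).mulVec r) j)) := by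
        exact tsum_congr hstep
    _ = ∑ j, ∑' t : ℕ, kernelMat P π sa j * (γ * (γ ^ t * ((kernelMat P π ^ t).mulVec r) j)) := by
        refine Summable.tsum_finsetSum fun j _ => ?_
        simpa [mul_assoc] using ((aux_summable hγ0 hγ1 hP hπ hr j).mul_left
          (kernelMat P π sa j * γ))
    _ = ∑ j, kernelMat P π sa j * (γ * Qval γ P π r j) := by
        refine Finset.sum_congr rfl fun j _ => ?_
        rw [tsum_mul_left, tsum_mul_left, ← Qval_apply hγ0 hγ1 hP hπ hr]
    _ = γ * ∑ s', P sa s' * Vval γ P π r s' := by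
        rw [Fintype.sum_prod_type]
        rw [Finset.mul_sum]
        refine Finset.sum_congr rfl fun s' _ => ?_
        rw [Vval, Finset.mul_sum, Finset.mul_sum]
        refine Finset.sum_congr rfl fun a' _ => ?_
        simp [kernelMat]; ring

end AuxMDP

section VarAlg
variable {S : Type*} [Fintype S]

lemma sum_shift_sq (p f : S → ℝ) (hp1 : ∑ s, p s = 1) (c : ℝ) :
    ∑ s, p s * (f s - c) ^ 2 = ∑ s, p s * f s ^ 2 - 2 * c * (∑ s, p s * f s) + c ^ 2 := by
  calc ∑ s, p s * (f s - c) ^ 2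
      = ∑ s, (p s * f s ^ 2 - 2 * c * (p s * f s) + c ^ 2 * p s) :=
        Finset.sum_congr rfl fun s _ => by ring
    _ = (∑ s, p s * f s ^ 2) - (∑ s, 2 * c * (p s * f s)) + ∑ s, c ^ 2 * p s := by
        rw [Finset.sum_add_distrib, Finset.sum_sub_distrib]
    _ = _ := by rw [← Finset.mul_sum, ← Finset.mul_sum, hp1, mul_one]

lemma var_eq_shift (p f : S → ℝ) (hp1 : ∑ s, p s = 1) (c : ℝ) :
    ∑ s, p s * f s ^ 2 - (∑ s, p s * f s) ^ 2
      = ∑ s, p s * (f s - c) ^ 2 - (∑ s, p s * f s - c) ^ 2 := by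
  rw [sum_shift_sq p f hp1 c]; ring

lemma sum_prob_bounds (p f : S → ℝ) (hp0 : ∀ s, 0 ≤ p s) (hp1 : ∑ s, p s = 1)
    (lo hi : ℝ) (hf : ∀ s, lo ≤ f s ∧ f s ≤ hi) :
    lo ≤ ∑ s, p s * f s ∧ ∑ s, p s * f s ≤ hi := by
  constructor
  · calc lo = ∑ s, p s * lo := by rw [← Finset.sum_mul, hp1, one_mul]
      _ ≤ ∑ s, p s * f s :=
        Finset.sum_le_sum fun s _ => mul_le_mul_of_nonneg_left (hf s).1 (hp0 s)
  · calc ∑ s, p s * f s ≤ ∑ s, p s * hi :=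
        Finset.sum_le_sum fun s _ => mul_le_mul_of_nonneg_left (hf s).2 (hp0 s)
      _ = hi := by rw [← Finset.sum_mul, hp1, one_mul]

lemma var_le_two_var (p f g : S → ℝ) (hp0 : ∀ s, 0 ≤ p s) (hp1 : ∑ s, p s = 1)
    (K : ℝ) (hK : ∀ s, |f s - g s| ≤ K) :
    ∑ s, p s * f s ^ 2 - (∑ s, p s * f s) ^ 2
      ≤ 2 * (∑ s, p s * g s ^ 2 - (∑ s, p s * g s) ^ 2) + 2 * K ^ 2 := by
  set c := ∑ s, p s * g s with hc
  have h1 : ∑ s, p s * f s ^ 2 - (∑ s, p s * f s) ^ 2 ≤ ∑ s, p s * (f s - c) ^ 2 := by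
    rw [var_eq_shift p f hp1 c]
    nlinarith [sq_nonneg (∑ s, p s * f s - c)]
  have h2 : ∀ s, p s * (f s - c) ^ 2 ≤ p s * (2 * (g s - c) ^ 2 + 2 * K ^ 2) := by
    intro s
    refine mul_le_mul_of_nonneg_left ?_ (hp0 s)
    have hfg : (f s - g s) ^ 2 ≤ K ^ 2 := by
      rw [← sq_abs]; exact pow_le_pow_left₀ (abs_nonneg _) (hK s) 2
    nlinarith [sq_nonneg ((f s - g s) - (g s - c))]
  have h3 : ∑ s, p s * (f s - c) ^ 2 ≤ ∑ s, p s * (2 * (g s - c) ^ 2 + 2 * K ^ 2) :=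
    Finset.sum_le_sum fun s _ => h2 s
  have h4 : ∑ s, p s * (2 * (g s - c) ^ 2 + 2 * K ^ 2)
      = 2 * (∑ s, p s * (g s - c) ^ 2) + 2 * K ^ 2 := by
    calc ∑ s, p s * (2 * (g s - c) ^ 2 + 2 * K ^ 2)
        = ∑ s, (2 * (p s * (g s - c) ^ 2) + 2 * K ^ 2 * p s) :=
          Finset.sum_congr rfl fun s _ => by ring
      _ = 2 * (∑ s, p s * (g s - c) ^ 2) + 2 * K ^ 2 := by
          rw [Finset.sum_add_distrib, ← Finset.mul_sum, ← Finset.mul_sum, hp1, mul_one]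
  have h5 : ∑ s, p s * (g s - c) ^ 2 = ∑ s, p s * g s ^ 2 - (∑ s, p s * g s) ^ 2 := by
    rw [sum_shift_sq p g hp1 c, ← hc]; ring
  linarith [h1, h3, h4 ▸ h3, h5]

lemma sum_diff_const (p q f : S → ℝ) (hp1 : ∑ s, p s = 1) (hq1 : ∑ s, q s = 1) (c : ℝ) :
    ∑ s, p s * f s - ∑ s, q s * f s = ∑ s, (p s - q s) * (f s - c) := by
  symm
  calc ∑ s, (p s - q s) * (f s - c)
      = ∑ s, ((p s * f s - q s * f s) - (c * p s - c * q s)) :=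
        Finset.sum_congr rfl fun s _ => by ring
    _ = ∑ s, p s * f s - ∑ s, q s * f s := by
        simp only [Finset.sum_sub_distrib]
        rw [← Finset.mul_sum, ← Finset.mul_sum, hp1, hq1]; ring

lemma abs_sum_diff_le (p q f : S → ℝ) (hp1 : ∑ s, p s = 1) (hq1 : ∑ s, q s = 1)
    (B ε : ℝ) (hB : 0 ≤ B) (hf : ∀ s, 0 ≤ f s ∧ f s ≤ B)
    (hpq : ∑ s, |p s - q s| ≤ ε) :
    |∑ s, p s * f s - ∑ s, q s * f s| ≤ ε * (B / 2) := by
  rw [sum_diff_const p q f hp1 hq1 (B / 2)]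
  calc |∑ s, (p s - q s) * (f s - B / 2)| ≤ ∑ s, |(p s - q s) * (f s - B / 2)| :=
        Finset.abs_sum_le_sum_abs _ _
    _ ≤ ∑ s, |p s - q s| * (B / 2) := by
        refine Finset.sum_le_sum fun s _ => ?_
        rw [abs_mul]
        refine mul_le_mul_of_nonneg_left ?_ (abs_nonneg _)
        rw [abs_le]
        constructor <;> linarith [(hf s).1, (hf s).2]
    _ = (∑ s, |p s - q s|) * (B / 2) := (Finset.sum_mul _ _ _).symm
    _ ≤ ε * (B / 2) := mul_le_mul_of_nonneg_right hpq (by linarith)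

lemma abs_sum_mul_le (p h : S → ℝ) (hp0 : ∀ s, 0 ≤ p s) (hp1 : ∑ s, p s = 1) (K : ℝ)
    (hh : ∀ s, |h s| ≤ K) : |∑ s, p s * h s| ≤ K := by
  calc |∑ s, p s * h s| ≤ ∑ s, |p s * h s| := Finset.abs_sum_le_sum_abs _ _
    _ ≤ ∑ s, p s * K := by
        refine Finset.sum_le_sum fun s _ => ?_
        rw [abs_mul, abs_of_nonneg (hp0 s)]
        exact mul_le_mul_of_nonneg_left (hh s) (hp0 s)
    _ = K := by rw [← Finset.sum_mul, hp1, one_mul]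

lemma var_kernel_change (p q f : S → ℝ) (hp0 : ∀ s, 0 ≤ p s) (hp1 : ∑ s, p s = 1)
    (hq0 : ∀ s, 0 ≤ q s) (hq1 : ∑ s, q s = 1) (B ε : ℝ) (hB : 0 ≤ B) (hε : 0 ≤ ε)
    (hf : ∀ s, 0 ≤ f s ∧ f s ≤ B) (hpq : ∑ s, |p s - q s| ≤ ε) :
    ∑ s, p s * f s ^ 2 - (∑ s, p s * f s) ^ 2
      ≤ (∑ s, q s * f s ^ 2 - (∑ s, q s * f s) ^ 2) + (3 / 2) * (ε * B ^ 2) := by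
  have hfsq : ∀ s, 0 ≤ f s ^ 2 ∧ f s ^ 2 ≤ B ^ 2 := fun s =>
    ⟨sq_nonneg _, by nlinarith [(hf s).1, (hf s).2]⟩
  have t1 := abs_sum_diff_le p q (fun s => f s ^ 2) hp1 hq1 (B ^ 2) ε (sq_nonneg B) hfsq hpq
  have t2 := abs_sum_diff_le p q f hp1 hq1 B ε hB hf hpq
  have tA := sum_prob_bounds p f hp0 hp1 0 B hf
  have tB := sum_prob_bounds q f hq0 hq1 0 B hf
  obtain ⟨t1l, t1r⟩ := abs_le.1 t1
  obtain ⟨t2l, t2r⟩ := abs_le.1 t2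
  have hprod : ((∑ s, q s * f s) - ∑ s, p s * f s) * ((∑ s, q s * f s) + ∑ s, p s * f s)
      ≤ (ε * (B / 2)) * (2 * B) := by
    apply mul_le_mul (by linarith) (by linarith) (by linarith)
    positivity
  nlinarith [hprod, t1r]

end VarAlg

theorem stmt_5 {S A : Type*} [Fintype S] [Fintype A] [DecidableEq S] [DecidableEq A]
    [Nonempty S] [Nonempty A]
    (γ : ℝ) (hγ : γ ∈ Set.Ico (0:ℝ) 1)
    (r : S × A → ℝ) (hr : ∀ sa, r sa ∈ Set.Icc (0:ℝ) 1)
    (n : ℕ) (hn : 1 ≤ n) (δ : ℝ) (hδ : δ ∈ Set.Ioo (0:ℝ) 1)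
    (P Ptilde : S × A → S → ℝ) (hP : IsKernel P) (hPt : IsKernel Ptilde)
    (hclose : ∀ sa : S × A, ∑ s', |P sa s' - Ptilde sa s'| ≤
      2 * Real.sqrt (Real.log (2 / δ) / (2 * n)))
    (π : S → A → ℝ) (hπ : IsPolicy π) :
    ∀ sa : S × A, localVar P (Vval γ P π r) sa ≤
      2 * localVar Ptilde (Vval γ Ptilde π r) sa
      + (6 / (1 - γ) ^ 2) * Real.sqrt (Real.log (2 / δ) / (2 * n))
      + (8 * γ ^ 2 / (1 - γ) ^ 4) * (Real.log (2 / δ) / (2 * n)) := by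
  obtain ⟨hγ0, hγ1⟩ := hγ
  obtain ⟨hδ0, hδ1⟩ := hδ
  have hγlt : 0 < 1 - γ := by linarith
  set x : ℝ := Real.log (2 / δ) / (2 * n) with hxdef
  have hn1 : (1:ℝ) ≤ (n:ℝ) := by exact_mod_cast hn
  have hlog : 0 ≤ Real.log (2 / δ) := Real.log_nonneg (by rw [le_div_iff₀ hδ0]; linarith)
  have hx : 0 ≤ x := div_nonneg hlog (by linarith)
  have hsx : 0 ≤ Real.sqrt x := Real.sqrt_nonneg x
  have hsx2 : Real.sqrt x ^ 2 = x := Real.sq_sqrt hx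
  set B : ℝ := (1 - γ)⁻¹ with hBdef
  have hB0 : 0 < B := inv_pos.2 hγlt
  have hBinv : (1 - γ) * B = 1 := mul_inv_cancel₀ (ne_of_gt hγlt)
  set ε : ℝ := 2 * Real.sqrt x with hεdef
  have hε : 0 ≤ ε := by positivity
  have hV : ∀ s, 0 ≤ Vval γ P π r s ∧ Vval γ P π r s ≤ B := by
    intro s; rw [hBdef]; exact Vval_bounds hγ0 hγ1 hP hπ hr s
  have hVt : ∀ s, 0 ≤ Vval γ Ptilde π r s ∧ Vval γ Ptilde π r s ≤ B := by
    intro s; rw [hBdef]; exact Vval_bounds hγ0 hγ1 hPt hπ hr s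
  have hne : (Finset.univ : Finset (S × A)).Nonempty := Finset.univ_nonempty
  set D : S × A → ℝ := fun sa => Qval γ P π r sa - Qval γ Ptilde π r sa with hDdef
  set K : ℝ := Finset.univ.sup' hne (fun sa => |D sa|) with hKdef
  have hKle : ∀ sa, |D sa| ≤ K := by
    intro sa; rw [hKdef]; exact Finset.le_sup' (fun sa => |D sa|) (Finset.mem_univ sa)
  obtain ⟨sa₀, -, hsa₀⟩ := Finset.exists_mem_eq_sup' hne (fun sa => |D sa|)
  have hK0 : 0 ≤ K := le_trans (abs_nonneg _) (hKle (Classical.arbitrary _))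
  have hVD : ∀ s, |Vval γ P π r s - Vval γ Ptilde π r s| ≤ K := by
    intro s
    have e : Vval γ P π r s - Vval γ Ptilde π r s = ∑ a, π s a * D (s, a) := by
      rw [Vval, Vval, ← Finset.sum_sub_distrib]
      exact Finset.sum_congr rfl fun a _ => by simp only [hDdef]; ring
    rw [e]
    exact abs_sum_mul_le (π s) (fun a => D (s, a)) (hπ.1 s) (hπ.2 s) K (fun a => hKle (s, a))
  have hsplit : ∀ sa : S × A, D sa =
      γ * ((∑ s', P sa s' * (Vval γ P π r s' - Vval γ Ptilde π r s'))
        + ∑ s', (P sa s' - Ptilde sa s') * Vval γ Ptilde π r s') := by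
    intro sa
    have e : ∑ s', P sa s' * Vval γ P π r s' - ∑ s', Ptilde sa s' * Vval γ Ptilde π r s'
        = (∑ s', P sa s' * (Vval γ P π r s' - Vval γ Ptilde π r s'))
          + ∑ s', (P sa s' - Ptilde sa s') * Vval γ Ptilde π r s' := by
      rw [← Finset.sum_add_distrib, ← Finset.sum_sub_distrib]
      exact Finset.sum_congr rfl fun s' _ => by ring
    simp only [hDdef]
    rw [bellman hγ0 hγ1 hP hπ hr sa, bellman hγ0 hγ1 hPt hπ hr sa]
    linear_combination γ * e
  have hterm2 : ∀ sa : S × A,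
      |∑ s', (P sa s' - Ptilde sa s') * Vval γ Ptilde π r s'| ≤ ε * (B / 2) := by
    intro sa
    have e : ∑ s', (P sa s' - Ptilde sa s') * Vval γ Ptilde π r s'
        = ∑ s', P sa s' * Vval γ Ptilde π r s' - ∑ s', Ptilde sa s' * Vval γ Ptilde π r s' := by
      rw [← Finset.sum_sub_distrib]
      exact Finset.sum_congr rfl fun s' _ => by ring
    rw [e]
    exact abs_sum_diff_le (P sa) (Ptilde sa) _ (hP.2 sa) (hPt.2 sa) B ε (le_of_lt hB0)
      hVt (hclose sa)
  have hKcon : K ≤ γ * K + γ * (ε * (B / 2)) := by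
    have hK_eq : K = |D sa₀| := by rw [hKdef]; exact hsa₀
    calc K = |D sa₀| := hK_eq
      _ = γ * |(∑ s', P sa₀ s' * (Vval γ P π r s' - Vval γ Ptilde π r s'))
            + ∑ s', (P sa₀ s' - Ptilde sa₀ s') * Vval γ Ptilde π r s'| := by
          rw [hsplit sa₀, abs_mul, abs_of_nonneg hγ0]
      _ ≤ γ * (|∑ s', P sa₀ s' * (Vval γ P π r s' - Vval γ Ptilde π r s')|
            + |∑ s', (P sa₀ s' - Ptilde sa₀ s') * Vval γ Ptilde π r s'|) :=
          mul_le_mul_of_nonneg_left (abs_add_le _ _) hγ0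
      _ ≤ γ * (K + ε * (B / 2)) := by
          refine mul_le_mul_of_nonneg_left (add_le_add ?_ (hterm2 sa₀)) hγ0
          exact abs_sum_mul_le (P sa₀) _ (hP.1 sa₀) (hP.2 sa₀) K (fun s' => hVD s')
      _ = γ * K + γ * (ε * (B / 2)) := by ring
  have hKfin : K ≤ γ * Real.sqrt x * B ^ 2 := by
    have h1 : K * (1 - γ) ≤ γ * (ε * (B / 2)) := by nlinarith [hKcon]
    calc K = K * (1 - γ) * B := by rw [mul_assoc, hBinv, mul_one]
      _ ≤ γ * (ε * (B / 2)) * B := mul_le_mul_of_nonneg_right h1 (le_of_lt hB0)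
      _ = γ * Real.sqrt x * B ^ 2 := by rw [hεdef]; ring
  intro sa
  have step1 : localVar P (Vval γ P π r) sa
      ≤ 2 * localVar P (Vval γ Ptilde π r) sa + 2 * K ^ 2 := by
    have := var_le_two_var (P sa) (Vval γ P π r) (Vval γ Ptilde π r) (hP.1 sa) (hP.2 sa) K hVD
    simpa [localVar] using this
  have step2 : localVar P (Vval γ Ptilde π r) sa
      ≤ localVar Ptilde (Vval γ Ptilde π r) sa + (3 / 2) * (ε * B ^ 2) := by
    have := var_kernel_change (P sa) (Ptilde sa) (Vval γ Ptilde π r) (hP.1 sa) (hP.2 sa)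
      (hPt.1 sa) (hPt.2 sa) B ε (le_of_lt hB0) hε hVt (hclose sa)
    simpa [localVar] using this
  have hK2 : K ^ 2 ≤ γ ^ 2 * x * B ^ 4 := by
    calc K ^ 2 ≤ (γ * Real.sqrt x * B ^ 2) ^ 2 := pow_le_pow_left₀ hK0 hKfin 2
      _ = γ ^ 2 * (Real.sqrt x ^ 2) * B ^ 4 := by ring
      _ = γ ^ 2 * x * B ^ 4 := by rw [hsx2]
  have e6 : 6 / (1 - γ) ^ 2 * Real.sqrt x = 3 * (ε * B ^ 2) := by
    rw [hεdef, hBdef, div_eq_mul_inv, ← inv_pow]; ring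
  have e8 : 8 * γ ^ 2 / (1 - γ) ^ 4 * x = 8 * (γ ^ 2 * x * B ^ 4) := by
    rw [hBdef, div_eq_mul_inv, ← inv_pow]; ring
  have hq : 0 ≤ γ ^ 2 * x * B ^ 4 := by positivity
  linarith [step1, step2, hK2, hq, e6, e8]
end

section
/- Let m ≥ 1 be an integer, R > 0, β > 0, ε > 0. Let Z be any set and f : Z → ℝ^m → ℝ be such that for every z ∈ Z the map y ↦ f(z, y) is β-Lipschitz with respect to the ℓ∞ norm on ℝ^m. Let T ≥ 1, let y₁, …, y_T lie in a closed ℓ∞-ball of radius R in ℝ^m, and let z₁, …, z_T ∈ Z satisfy f(z_t, y_t) > ε for every 1 ≤ t ≤ T and f(z_t, y_{t'}) ≤ 0 for all 1 ≤ t' < t ≤ T. Then ‖y_t − y_{t'}‖_∞ > ε/β for all t ≠ t', and consequently T ≤ (2Rβ/ε + 1)^m. -/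
theorem stmt_9 (m : ℕ) (hm : 1 ≤ m) (R β ε : ℝ) (hR : 0 < R) (hβ : 0 < β) (hε : 0 < ε)
    {Z : Type*} (f : Z → (Fin m → ℝ) → ℝ)
    (hf : ∀ z y y', |f z y - f z y'| ≤ β * ‖y - y'‖)
    (T : ℕ) (hT : 1 ≤ T) (c : Fin m → ℝ)
    (y : Fin T → Fin m → ℝ) (hy : ∀ t, y t ∈ Metric.closedBall c R)
    (z : Fin T → Z)
    (h1 : ∀ t, ε < f (z t) (y t))
    (h2 : ∀ t t' : Fin T, t' < t → f (z t) (y t') ≤ 0) :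
    (∀ t t' : Fin T, t ≠ t' → ε / β < ‖y t - y t'‖) ∧
      (T : ℝ) ≤ (2 * R * β / ε + 1) ^ m := by
  have hsep : ∀ t t' : Fin T, t' < t → ε / β < ‖y t - y t'‖ := by
    intro t t' h
    have h0 := h2 t t' h
    have h1' := h1 t
    have hh := hf (z t) (y t) (y t')
    have habs : ε < |f (z t) (y t) - f (z t) (y t')| :=
      lt_of_lt_of_le (by linarith) (le_abs_self _)
    rw [div_lt_iff₀ hβ]
    nlinarith
  have hsep' : ∀ t t' : Fin T, t ≠ t' → ε / β < ‖y t - y t'‖ := by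
    intro t t' hne
    rcases lt_or_gt_of_ne hne with h | h
    · rw [norm_sub_rev]; exact hsep t' t h
    · exact hsep t t' h
  refine ⟨hsep', ?_⟩
  set δ := ε / β with hδ
  have hδpos : 0 < δ := div_pos hε hβ
  set N : ℕ := Nat.floor (2 * R * β / ε) + 1 with hN
  have hcoord : ∀ t j, |y t j - c j| ≤ R := by
    intro t j
    have hyt := hy t
    rw [Metric.mem_closedBall] at hyt
    calc |y t j - c j| = ‖(y t - c) j‖ := by simp [Real.norm_eq_abs]
      _ ≤ ‖y t - c‖ := norm_le_pi_norm _ j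
      _ ≤ R := by rwa [← dist_eq_norm]
  have hbound : ∀ t j, (y t j - c j + R) / δ < N := by
    intro t j
    have hle := (abs_le.mp (hcoord t j)).2
    have h2R : y t j - c j + R ≤ 2 * R := by linarith
    have key : (y t j - c j + R) / δ ≤ 2 * R * β / ε := by
      rw [hδ, div_div_eq_mul_div]
      gcongr
    calc (y t j - c j + R) / δ ≤ 2 * R * β / ε := key
      _ < N := by
          rw [hN]
          push_cast
          exact Nat.lt_floor_add_one _
  have hnn : ∀ t j, 0 ≤ y t j - c j + R := by
    intro t j
    have := abs_le.mp (hcoord t j)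
    linarith [this.1]
  have hnn' : ∀ t j, 0 ≤ (y t j - c j + R) / δ := fun t j =>
    div_nonneg (hnn t j) hδpos.le
  let g : Fin T → (Fin m → Fin N) := fun t j =>
    ⟨Nat.floor ((y t j - c j + R) / δ), (Nat.floor_lt (hnn' t j)).mpr (by
      simpa using hbound t j)⟩
  have hinj : Function.Injective g := by
    intro t t' hg
    by_contra hne
    have hlt : ‖y t - y t'‖ < δ := by
      rw [pi_norm_lt_iff hδpos]
      intro j
      have hfloor : Nat.floor ((y t j - c j + R) / δ) =
          Nat.floor ((y t' j - c j + R) / δ) := by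
        have := congrFun hg j
        simpa [g, Fin.ext_iff] using this
      set a := (y t j - c j + R) / δ
      set b := (y t' j - c j + R) / δ
      have h1a : (Nat.floor a : ℝ) ≤ a := Nat.floor_le (hnn' t j)
      have h2a : a < Nat.floor a + 1 := Nat.lt_floor_add_one a
      have h1b : (Nat.floor b : ℝ) ≤ b := Nat.floor_le (hnn' t' j)
      have h2b : b < Nat.floor b + 1 := Nat.lt_floor_add_one b
      have hab : |a - b| < 1 := by
        rw [abs_lt]
        have hfe : ((Nat.floor a : ℕ) : ℝ) = ((Nat.floor b : ℕ) : ℝ) := by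
          exact_mod_cast hfloor
        constructor <;> linarith
      have hab' : |y t j - y t' j| < δ := by
        have : y t j - y t' j = (a - b) * δ := by
          show y t j - y t' j = ((y t j - c j + R) / δ - (y t' j - c j + R) / δ) * δ
          rw [sub_mul, div_mul_cancel₀ _ hδpos.ne', div_mul_cancel₀ _ hδpos.ne']
          ring
        rw [this, abs_mul, abs_of_pos hδpos]
        nlinarith [abs_nonneg (a - b)]
      simpa [Real.norm_eq_abs] using hab'
    exact absurd hlt (not_lt.mpr (hsep' t t' hne).le)
  have hcard : T ≤ N ^ m := by
    have := Fintype.card_le_of_injective g hinj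
    simpa using this
  have hNle : (N : ℝ) ≤ 2 * R * β / ε + 1 := by
    rw [hN]
    push_cast
    have : (0:ℝ) ≤ 2 * R * β / ε := by positivity
    linarith [Nat.floor_le this]
  calc (T : ℝ) ≤ (N : ℝ) ^ m := by exact_mod_cast hcard
    _ ≤ (2 * R * β / ε + 1) ^ m := by
        apply pow_le_pow_left₀ (by positivity) hNle
end

section
/- Let P be a transition kernel on finite S, A, let π be a stationary policy, let μ be a probability distribution on S, and let γ ∈ [0,1). Define the row vector ρ₀ on S×A by ρ₀(s,a) = μ(s)·π(a|s), the iterates ρ_{t+1} = ρ_t·P^π, and the occupancy measure ν_π(s,a) = (1−γ)·∑_{t=0}^∞ γ^t·ρ_t(s,a) (the series converges since 0 ≤ γ < 1). Then: (i) for every s ∈ S, ∑_{s'∈S, a∈A} ν_π(s',a)·( 1{s'=s} − γ·P(s|s',a) ) = (1−γ)·μ(s); and (ii) for every r : S×A → ℝ, ∑_{(s,a)∈S×A} ν_π(s,a)·r(s,a) = (1−γ)·V_r^{π,P}(μ). -/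
open Matrix MeasureTheory ProbabilityTheory

theorem stmt_13 {S A : Type*} [Fintype S] [Fintype A] [DecidableEq S] [DecidableEq A]
    [Nonempty S] [Nonempty A]
    (P : S × A → S → ℝ) (hP : IsKernel P)
    (π : S → A → ℝ) (hπ : IsPolicy π)
    (μ0 : S → ℝ) (hμ0 : (∀ s, 0 ≤ μ0 s) ∧ ∑ s, μ0 s = 1)
    (γ : ℝ) (hγ : γ ∈ Set.Ico (0:ℝ) 1)
    (ρ : ℕ → S × A → ℝ)
    (hρ0 : ∀ sa : S × A, ρ 0 sa = μ0 sa.1 * π sa.1 sa.2)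
    (hρsucc : ∀ t, ρ (t + 1) = Matrix.vecMul (ρ t) (kernelMat P π))
    (ν : S × A → ℝ)
    (hν : ∀ sa, ν sa = (1 - γ) * ∑' t : ℕ, γ ^ t * ρ t sa) :
    (∀ s : S, ∑ sa : S × A, ν sa * ((if sa.1 = s then (1:ℝ) else 0) - γ * P sa s)
        = (1 - γ) * μ0 s)
    ∧ ∀ r : S × A → ℝ, ∑ sa : S × A, ν sa * r sa = (1 - γ) * VvalMu γ P π r μ0 := by
  obtain ⟨hγ0, hγ1⟩ := hγ
  set M := kernelMat P π with hMdef
  have hMnn : ∀ x y : S × A, 0 ≤ M x y := fun x y =>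
    mul_nonneg (hP.1 x y.1) (hπ.1 y.1 y.2)
  have hMrow : ∀ x : S × A, ∑ y, M x y = 1 := by
    intro x
    rw [Fintype.sum_prod_type]
    have : ∀ s' : S, ∑ a', M x (s', a') = P x s' := by
      intro s'
      simp only [hMdef, kernelMat, ← Finset.mul_sum, hπ.2 s', mul_one]
    simp [this, hP.2 x]
  -- nonneg / sum-one for ρ t
  have hρbasic : ∀ t, (∀ sa, 0 ≤ ρ t sa) ∧ ∑ sa, ρ t sa = 1 := by
    intro t
    induction t with
    | zero =>
      constructor
      · intro sa; rw [hρ0]; exact mul_nonneg (hμ0.1 _) (hπ.1 _ _)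
      · rw [Fintype.sum_prod_type]
        have : ∀ s : S, ∑ a, ρ 0 (s, a) = μ0 s := by
          intro s
          simp only [hρ0, ← Finset.mul_sum, hπ.2 s, mul_one]
        simp [this, hμ0.2]
    | succ t ih =>
      constructor
      · intro sa
        rw [hρsucc t]
        simp only [Matrix.vecMul, dotProduct]
        exact Finset.sum_nonneg fun x _ => mul_nonneg (ih.1 x) (hMnn x sa)
      · rw [hρsucc t]
        simp only [Matrix.vecMul, dotProduct]
        rw [Finset.sum_comm]
        calc ∑ x, ∑ sa, ρ t x * M x sa = ∑ x : S × A, ρ t x := by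
              simp [← Finset.mul_sum, hMrow]
          _ = 1 := ih.2
  have hρnn : ∀ t sa, 0 ≤ ρ t sa := fun t => (hρbasic t).1
  have hρle : ∀ t sa, ρ t sa ≤ 1 := by
    intro t sa
    calc ρ t sa ≤ ∑ x, ρ t x :=
          Finset.single_le_sum (fun x _ => hρnn t x) (Finset.mem_univ sa)
      _ = 1 := (hρbasic t).2
  have hgeo : Summable (fun t : ℕ => γ ^ t) := summable_geometric_of_lt_one hγ0 hγ1
  have hsum1 : ∀ sa, Summable (fun t : ℕ => γ ^ t * ρ t sa) := by
    intro sa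
    apply Summable.of_nonneg_of_le
      (fun t => mul_nonneg (pow_nonneg hγ0 t) (hρnn t sa))
      (fun t => ?_) hgeo
    calc γ ^ t * ρ t sa ≤ γ ^ t * 1 :=
          mul_le_mul_of_nonneg_left (hρle t sa) (pow_nonneg hγ0 t)
      _ = γ ^ t := mul_one _
  constructor
  · -- part (i)
    intro s
    set f : ℕ → ℝ := fun t => ∑ a, ρ t (s, a) with hfdef
    have hfnn : ∀ t, 0 ≤ f t := fun t => Finset.sum_nonneg fun a _ => hρnn t (s, a)
    have hfle : ∀ t, f t ≤ (Fintype.card A : ℝ) := by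
      intro t
      calc f t ≤ ∑ _a : A, (1 : ℝ) := Finset.sum_le_sum fun a _ => hρle t (s, a)
        _ = (Fintype.card A : ℝ) := by simp
    have hfs : Summable (fun t => γ ^ t * f t) := by
      apply Summable.of_nonneg_of_le
        (fun t => mul_nonneg (pow_nonneg hγ0 t) (hfnn t)) (fun t => ?_)
        (hgeo.mul_left (Fintype.card A : ℝ))
      exact mul_le_mul_of_nonneg_left (hfle t) (pow_nonneg hγ0 t) |>.trans_eq
        (mul_comm _ _)
    have hfs' : Summable (fun t => γ ^ t * f (t + 1)) := by
      apply Summable.of_nonneg_of_le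
        (fun t => mul_nonneg (pow_nonneg hγ0 t) (hfnn (t + 1))) (fun t => ?_)
        (hgeo.mul_left (Fintype.card A : ℝ))
      exact mul_le_mul_of_nonneg_left (hfle (t + 1)) (pow_nonneg hγ0 t) |>.trans_eq
        (mul_comm _ _)
    -- g t = ∑ sa, ρ t sa * P sa s equals f (t+1)
    have hg : ∀ t, ∑ sa : S × A, ρ t sa * P sa s = f (t + 1) := by
      intro t
      simp only [hfdef, hρsucc t, Matrix.vecMul, dotProduct]
      rw [Finset.sum_comm]
      apply Finset.sum_congr rfl
      intro x _
      simp only [hMdef, kernelMat]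
      rw [← Finset.mul_sum]
      have hps : (∑ a, P x s * π s a) = P x s := by
        rw [← Finset.mul_sum, hπ.2 s, mul_one]
      rw [hps]
    have h1 : ∑ sa : S × A, ν sa * (if sa.1 = s then (1:ℝ) else 0)
        = (1 - γ) * ∑' t, γ ^ t * f t := by
      have : ∑ sa : S × A, ν sa * (if sa.1 = s then (1:ℝ) else 0)
          = ∑ a, ν (s, a) := by
        rw [Fintype.sum_prod_type]
        rw [Finset.sum_eq_single s]
        · simp
        · intro b _ hb; simp [hb]
        · intro h; exact absurd (Finset.mem_univ s) h
      rw [this]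
      simp only [hν]
      rw [← Finset.mul_sum]
      congr 1
      rw [← Summable.tsum_finsetSum (fun a _ => hsum1 (s, a))]
      apply tsum_congr
      intro t
      rw [hfdef, Finset.mul_sum]
    have h2 : ∑ sa : S × A, ν sa * P sa s = (1 - γ) * ∑' t, γ ^ t * f (t + 1) := by
      have hsa : ∀ sa : S × A, ν sa * P sa s
          = (1 - γ) * ∑' t, γ ^ t * ρ t sa * P sa s := by
        intro sa
        rw [hν, mul_assoc]
        congr 1
        rw [← tsum_mul_right]
      simp only [hsa]
      rw [← Finset.mul_sum]
      congr 1
      rw [← Summable.tsum_finsetSum (fun sa _ => by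
        simpa only [mul_assoc] using (hsum1 sa).mul_right (P sa s))]
      apply tsum_congr
      intro t
      rw [← hg t, Finset.mul_sum]
      apply Finset.sum_congr rfl
      intro x _
      ring
    have hsplit : ∑ sa : S × A, ν sa * ((if sa.1 = s then (1:ℝ) else 0) - γ * P sa s)
        = (∑ sa : S × A, ν sa * (if sa.1 = s then (1:ℝ) else 0))
          - γ * ∑ sa : S × A, ν sa * P sa s := by
      rw [Finset.mul_sum, ← Finset.sum_sub_distrib]
      apply Finset.sum_congr rfl
      intro x _
      ring
    rw [hsplit, h1, h2]
    have hshift : ∑' t, γ ^ t * f t = f 0 + γ * ∑' t, γ ^ t * f (t + 1) := by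
      rw [Summable.tsum_eq_zero_add hfs]
      simp only [pow_zero, one_mul, pow_succ]
      rw [← tsum_mul_left]
      congr 1
      apply tsum_congr
      intro t
      ring
    have hf0 : f 0 = μ0 s := by
      simp only [hfdef, hρ0, ← Finset.mul_sum, hπ.2 s, mul_one]
    rw [hshift, hf0]
    ring
  · -- part (ii)
    intro r
    -- powers of M are stochastic
    have hpow : ∀ t, (∀ x y : S × A, 0 ≤ (M ^ t) x y) ∧ ∀ x, ∑ y, (M ^ t) x y = 1 := by
      intro t
      induction t with
      | zero =>
        constructor
        · intro x y
          by_cases h : x = y <;> simp [Matrix.one_apply, h]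
        · intro x; simp [Matrix.one_apply]
      | succ t ih =>
        constructor
        · intro x y
          rw [pow_succ, Matrix.mul_apply]
          exact Finset.sum_nonneg fun z _ => mul_nonneg (ih.1 x z) (hMnn z y)
        · intro x
          simp only [pow_succ, Matrix.mul_apply]
          rw [Finset.sum_comm]
          calc ∑ z, ∑ y, (M ^ t) x z * M z y = ∑ z, (M ^ t) x z := by
                simp [← Finset.mul_sum, hMrow]
            _ = 1 := ih.2 x
    have hpowle : ∀ t (x y : S × A), (M ^ t) x y ≤ 1 := by
      intro t x y
      calc (M ^ t) x y ≤ ∑ z, (M ^ t) x z :=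
            Finset.single_le_sum (fun z _ => (hpow t).1 x z) (Finset.mem_univ y)
        _ = 1 := (hpow t).2 x
    set C : ℝ := ∑ y : S × A, |r y| with hCdef
    have hmvbound : ∀ t (x : S × A), |((M ^ t).mulVec r) x| ≤ C := by
      intro t x
      simp only [Matrix.mulVec, dotProduct]
      calc |∑ y, (M ^ t) x y * r y| ≤ ∑ y, |(M ^ t) x y * r y| :=
            Finset.abs_sum_le_sum_abs _ _
        _ ≤ C := by
            rw [hCdef]
            apply Finset.sum_le_sum
            intro y _
            rw [abs_mul, abs_of_nonneg ((hpow t).1 x y)]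
            calc (M ^ t) x y * |r y| ≤ 1 * |r y| :=
                  mul_le_mul_of_nonneg_right (hpowle t x y) (abs_nonneg _)
              _ = |r y| := one_mul _
    have hQsummand : ∀ sa : S × A, Summable (fun t => γ ^ t * ((M ^ t).mulVec r) sa) := by
      intro sa
      apply Summable.of_abs
      apply Summable.of_nonneg_of_le (fun t => abs_nonneg _) (fun t => ?_)
        (hgeo.mul_left C)
      rw [abs_mul, abs_pow, abs_of_nonneg hγ0]
      calc γ ^ t * |((M ^ t).mulVec r) sa| ≤ γ ^ t * C :=
            mul_le_mul_of_nonneg_left (hmvbound t sa) (pow_nonneg hγ0 t)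
        _ = C * γ ^ t := mul_comm _ _
    have hQpi : Summable (fun t : ℕ => γ ^ t • (M ^ t).mulVec r) := by
      rw [Pi.summable]
      intro sa
      simpa [smul_eq_mul] using hQsummand sa
    have hQ : ∀ sa : S × A, Qval γ P π r sa = ∑' t, γ ^ t * ((M ^ t).mulVec r) sa := by
      intro sa
      rw [Qval, ← hMdef]
      rw [tsum_apply hQpi]
      apply tsum_congr
      intro t
      simp [smul_eq_mul]
    -- closed form for ρ
    have hρclosed : ∀ t, ρ t = Matrix.vecMul (ρ 0) (M ^ t) := by
      intro t
      induction t with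
      | zero => simp
      | succ t ih =>
        rw [hρsucc t, ih, Matrix.vecMul_vecMul, ← pow_succ]
    have hdot : ∀ t, ∑ sa : S × A, ρ t sa * r sa
        = ∑ sa : S × A, ρ 0 sa * ((M ^ t).mulVec r) sa := by
      intro t
      have := Matrix.dotProduct_mulVec (ρ 0) (M ^ t) r
      simp only [dotProduct] at this
      rw [hρclosed t, ← this]
    -- LHS
    have hlhs : ∑ sa : S × A, ν sa * r sa
        = (1 - γ) * ∑' t, γ ^ t * ∑ sa : S × A, ρ t sa * r sa := by
      have hsa : ∀ sa : S × A, ν sa * r sa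
          = (1 - γ) * ∑' t, γ ^ t * ρ t sa * r sa := by
        intro sa
        rw [hν, mul_assoc]
        congr 1
        rw [← tsum_mul_right]
      simp only [hsa]
      rw [← Finset.mul_sum]
      congr 1
      rw [← Summable.tsum_finsetSum (fun sa _ => by
        simpa only [mul_assoc] using (hsum1 sa).mul_right (r sa))]
      apply tsum_congr
      intro t
      rw [Finset.mul_sum]
      apply Finset.sum_congr rfl
      intro x _
      ring
    rw [hlhs]
    -- RHS
    have hrhs : VvalMu γ P π r μ0 = ∑' t, γ ^ t * ∑ sa : S × A, ρ t sa * r sa := by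
      rw [VvalMu]
      have : ∀ s : S, μ0 s * Vval γ P π r s = ∑ a, ρ 0 (s, a) * Qval γ P π r (s, a) := by
        intro s
        rw [Vval, Finset.mul_sum]
        apply Finset.sum_congr rfl
        intro a _
        rw [hρ0]
        ring
      simp only [this]
      have hps : (∑ sa : S × A, ρ 0 sa * Qval γ P π r sa)
          = ∑ s, ∑ a, ρ 0 (s, a) * Qval γ P π r (s, a) := Fintype.sum_prod_type _
      rw [← hps]
      have hsa : ∀ sa : S × A, ρ 0 sa * Qval γ P π r sa
          = ∑' t, ρ 0 sa * (γ ^ t * ((M ^ t).mulVec r) sa) := by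
        intro sa
        rw [hQ sa, ← tsum_mul_left]
      simp only [hsa]
      rw [← Summable.tsum_finsetSum (fun sa _ => (hQsummand sa).mul_left (ρ 0 sa))]
      apply tsum_congr
      intro t
      rw [hdot t, Finset.mul_sum]
      apply Finset.sum_congr rfl
      intro x _
      ring
    rw [hrhs]
end
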